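/- Let s be a weak composition, T an s-decreasing tree, and (a,b), (c,d) distinct tree ascents of T. Let Z and Q be the s-tree rotations of T along (a,b) and (c,d) respectively. Then inv(Z ∨ Q) = ((inv(T)+(b,a))^tc + (d,c))^tc, and likewise inv(Z ∨ Q) = ((inv(T)+(d,c))^tc + (b,a))^tc, where ∨ denotes the join in s-weak order. -/
import Mathlib


open scoped Classical

/-- An `s`-decreasing tree with internal vertices `1,…,n` (the root is `n`), encoded by
recording, for each non-root internal vertex `v`, its parent `parent v` (an internal vertex
with a larger label, so that labels decrease away from the root) and the index `idx v` of
the child slot of `parent v` (among `0,…,s (parent v)`, left to right) containing `v`.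
Distinct internal vertices occupy distinct child slots; all remaining slots are leaves. -/
structure SDecTree (n : ℕ) (s : ℕ → ℕ) where
  parent : ℕ → ℕ
  idx : ℕ → ℕ
  parent_gt : ∀ v, 1 ≤ v → v < n → v < parent v
  parent_le : ∀ v, 1 ≤ v → v < n → parent v ≤ n
  idx_le : ∀ v, 1 ≤ v → v < n → idx v ≤ s (parent v)
  slot_inj : ∀ v w, 1 ≤ v → v < n → 1 ≤ w → w < n →
      parent v = parent w → idx v = idx w → v = w
  parent_out : ∀ v, v = 0 ∨ n ≤ v → parent v = 0
  idx_out : ∀ v, v = 0 ∨ n ≤ v → idx v = 0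

namespace SDecTree

variable {n : ℕ} {s : ℕ → ℕ}

/-- `y` is a weak ancestor of `x`, i.e. `x` is a labeled vertex of the subtree `T^y`. -/
def Descend (T : SDecTree n s) (x y : ℕ) : Prop :=
  ∃ k, T.parent^[k] x = y ∧ ∀ m ≤ k, 1 ≤ T.parent^[m] x ∧ T.parent^[m] x ≤ n

/-- `x` is a labeled vertex of the subtree `T^y_j` rooted at the `j`-th child of `y`. -/
def InSub (T : SDecTree n s) (y j x : ℕ) : Prop :=
  ∃ c, T.Descend x c ∧ T.parent c = y ∧ T.idx c = j

/-- `x` lies strictly left of `y` in the planar tree `T`. -/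
def LeftOf (T : SDecTree n s) (x y : ℕ) : Prop :=
  ∃ z j₁ j₂, j₁ < j₂ ∧ T.InSub z j₁ x ∧ T.InSub z j₂ y

/-- The cardinality `#_T(y,x)` of the pair `(y,x)`: it is `j` if `x ∈ T^y_j`
(so `0` if `x ∈ T^y_0` and `s y` if `x ∈ T^y_{s y}`), `0` if `x` is left of `y`, and
`s y` if `x` is right of `y`; it is `0` for out-of-range pairs. -/
noncomputable def card (T : SDecTree n s) (y x : ℕ) : ℕ :=
  if h : ∃ j, T.InSub y j x then h.choose
  else if 1 ≤ x ∧ x < y ∧ y ≤ n ∧ ¬ T.LeftOf x y then s y else 0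

/-- `x` is a labeled vertex of `T^a ∖ 0`, i.e. of `T^a` with `T^a_0` replaced by a leaf. -/
def InSubMinus0 (T : SDecTree n s) (a x : ℕ) : Prop :=
  x = a ∨ ∃ j, 0 < j ∧ T.InSub a j x

/-- `(a,b)` is a tree ascent of `T`. -/
def TreeAscent (T : SDecTree n s) (a b : ℕ) : Prop :=
  1 ≤ a ∧ a < b ∧ b ≤ n ∧
  (∃ i, i < s b ∧ T.InSub b i a) ∧
  (∀ e j, a < e → e < b → T.InSub e j a → j = s e) ∧
  (0 < s a → ∀ x, ¬ T.InSub a (s a) x)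

end SDecTree

/-- A multi-inversion set (encoded by its multiplicity function) is transitive:
if `a < b < c` then `#(b,a) = 0` or `#(c,a) ≥ #(c,b)`. -/
def IsTransitiveInv (I : ℕ → ℕ → ℕ) : Prop :=
  ∀ a b c, a < b → b < c → I b a = 0 ∨ I c b ≤ I c a

/-- The transitive closure of a multi-inversion set: the smallest (by inclusion, i.e.
pointwise on multiplicities) transitive multi-inversion set containing it. -/
noncomputable def tcInv (I : ℕ → ℕ → ℕ) : ℕ → ℕ → ℕ := fun y x =>
  sInf {m | ∃ J : ℕ → ℕ → ℕ, IsTransitiveInv J ∧ (∀ y' x', I y' x' ≤ J y' x') ∧ J y x = m}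

/-- Add one copy of the inversion `(b,a)` to `I`, capping the multiplicity at `s b`. -/
def addInv (s : ℕ → ℕ) (I : ℕ → ℕ → ℕ) (b a : ℕ) : ℕ → ℕ → ℕ := fun y x =>
  if y = b ∧ x = a then min (I y x + 1) (s y) else I y x

namespace SDecTree

variable {n : ℕ} {s : ℕ → ℕ}

/-- The `s`-weak order: `T ⪯ Z` iff `#_T(y,x) ≤ #_Z(y,x)` for all pairs. -/
def wle (T Z : SDecTree n s) : Prop := ∀ y x, T.card y x ≤ Z.card y x

/-- Strict `s`-weak order. -/
def wlt (T Z : SDecTree n s) : Prop := wle T Z ∧ ¬ wle Z T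

/-- Cover relation in the `s`-weak order. -/
def wcov (T Z : SDecTree n s) : Prop := wlt T Z ∧ ∀ U, wlt T U → wlt U Z → False

/-- `W` is the join of `T` and `Z` in the `s`-weak order. -/
def IsJoin (T Z W : SDecTree n s) : Prop :=
  wle T W ∧ wle Z W ∧ ∀ U, wle T U → wle Z U → wle W U

/-- `Z` is the `s`-tree rotation of `T` along the tree ascent `(a,b)`, i.e.
`inv Z = (inv T + (b,a))^tc`. -/
def IsRotation (T Z : SDecTree n s) (a b : ℕ) : Prop :=
  T.TreeAscent a b ∧
  ∀ y x, 1 ≤ x → x < y → y ≤ n → Z.card y x = tcInv (addInv s T.card b a) y x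

/-- The set `A_T(a,b)` of inversions added by a rotation producing `Z`: the pairs `(f,e)`
with `#_Z(f,e) > #_T(f,e)`. -/
def Aset (T Z : SDecTree n s) : Set (ℕ × ℕ) :=
  {p | T.card p.1 p.2 < Z.card p.1 p.2}

/-- The set `A_T(a,b)` described directly via the transitive closure. -/
def ARot (T : SDecTree n s) (a b : ℕ) : Set (ℕ × ℕ) :=
  {p | T.card p.1 p.2 < tcInv (addInv s T.card b a) p.1 p.2}

/-- The set `F_T(a,c)` (here `b` and `d` are the partners of `a` and `c` in the
respective tree ascents `(a,b)` and `(c,d)`): it is `{(d,e) : e ∈ T^a∖0}` if `b = c`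
and `a ∈ T^c_0`, and empty otherwise. -/
def Fset (T : SDecTree n s) (a b c d : ℕ) : Set (ℕ × ℕ) :=
  {p | b = c ∧ T.InSub c 0 a ∧ p.1 = d ∧ T.InSubMinus0 a p.2}

/-- `T` is an `s`-Tamari tree: `#_T(c,a) ≤ #_T(c,b)` whenever `a < b < c`. -/
def IsTamari (T : SDecTree n s) : Prop :=
  ∀ a b c, a < b → b < c → T.card c a ≤ T.card c b

/-- `(a,b)` is a Tamari tree ascent of `T`: `a` is a non-rightmost child of `b`. -/
def TamariAscent (T : SDecTree n s) (a b : ℕ) : Prop :=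
  1 ≤ a ∧ a < n ∧ T.parent a = b ∧ T.card b a < s b

/-- `Z` is the `s`-Tamari rotation of `T` along the Tamari tree ascent `(a,b)`. -/
def IsTamRotation (T Z : SDecTree n s) (a b : ℕ) : Prop :=
  T.TamariAscent a b ∧
  ∀ y x, 1 ≤ x → x < y → y ≤ n → Z.card y x = tcInv (addInv s T.card b a) y x

/-- Cover relation in the `s`-Tamari lattice. -/
def tamcov (T Z : SDecTree n s) : Prop :=
  IsTamari T ∧ IsTamari Z ∧ wlt T Z ∧ ∀ U, IsTamari U → wlt T U → wlt U Z → False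

/-- `W` is the join of `T` and `Z` in the `s`-Tamari lattice. -/
def IsTamJoin (T Z W : SDecTree n s) : Prop :=
  IsTamari W ∧ wle T W ∧ wle Z W ∧ ∀ U, IsTamari U → wle T U → wle Z U → wle W U

/-- The open interval `(T,Z)` in the `s`-weak order. -/
def OpenInterval (T Z : SDecTree n s) : Set (SDecTree n s) := {U | wlt T U ∧ wlt U Z}

/-- A set of trees forming a chain in the `s`-weak order. -/
def IsChainSet (C : Set (SDecTree n s)) : Prop :=
  C.Pairwise fun U V => wlt U V ∨ wlt V U

/-- The geometric realization of the order complex `Δ(T,Z)` of the open interval `(T,Z)`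
in the `s`-weak order: the space of finitely supported probability vectors on the vertex
set whose support is a chain of the open interval. -/
def orderComplex (T Z : SDecTree n s) : Set (SDecTree n s → ℝ) :=
  {f | (∀ U, 0 ≤ f U) ∧ (Function.support f).Finite ∧
    Function.support f ⊆ OpenInterval T Z ∧ IsChainSet (Function.support f) ∧
    ∑ᶠ U, f U = 1}

/-- The geometric realization of the order complex of the open interval `(T,Z)` in the
`s`-Tamari lattice. -/
def tamOrderComplex (T Z : SDecTree n s) : Set (SDecTree n s → ℝ) :=
  {f | (∀ U, 0 ≤ f U) ∧ (Function.support f).Finite ∧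
    Function.support f ⊆ {U | IsTamari U ∧ wlt T U ∧ wlt U Z} ∧
    IsChainSet (Function.support f) ∧ ∑ᶠ U, f U = 1}

end SDecTree

/-- The list of labels of the consecutive cover relations along a saturated chain,
recorded as a list of poset elements. -/
def labelsOf {α : Type*} (lab : α → α → ℕ) (L : List α) : List ℕ :=
  (L.zip L.tail).map fun p => lab p.1 p.2

section TCBasics

/-- A canonical transitive function dominating `I`. -/
private noncomputable def bigJ (I : ℕ → ℕ → ℕ) : ℕ → ℕ → ℕ := fun y x =>
  max (I y x) ((Finset.Icc x y).sup (I y))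

private lemma bigJ_trans (I : ℕ → ℕ → ℕ) : IsTransitiveInv (bigJ I) := by
  intro a b c hab hbc
  right
  simp only [bigJ]
  apply max_le
  · exact le_max_of_le_right (Finset.le_sup (Finset.mem_Icc.2 ⟨hab.le, hbc.le⟩))
  · refine le_max_of_le_right (Finset.sup_mono ?_)
    intro t ht
    rcases Finset.mem_Icc.1 ht with ⟨h1, h2⟩
    exact Finset.mem_Icc.2 ⟨hab.le.trans h1, h2⟩

private lemma le_bigJ (I : ℕ → ℕ → ℕ) : ∀ y x, I y x ≤ bigJ I y x := fun y x => le_max_left _ _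

private lemma tcSet_nonempty (I : ℕ → ℕ → ℕ) (y x : ℕ) :
    {m | ∃ J : ℕ → ℕ → ℕ, IsTransitiveInv J ∧ (∀ y' x', I y' x' ≤ J y' x') ∧ J y x = m}.Nonempty :=
  ⟨bigJ I y x, bigJ I, bigJ_trans I, le_bigJ I, rfl⟩

/-- `tcInv I ≤ J` for any transitive `J ≥ I`. -/
lemma tcInv_le {I J : ℕ → ℕ → ℕ} (hJ : IsTransitiveInv J) (hIJ : ∀ y x, I y x ≤ J y x) :
    ∀ y x, tcInv I y x ≤ J y x := fun y x => Nat.sInf_le ⟨J, hJ, hIJ, rfl⟩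

/-- `I ≤ tcInv I`. -/
lemma le_tcInv (I : ℕ → ℕ → ℕ) : ∀ y x, I y x ≤ tcInv I y x := by
  intro y x
  obtain ⟨J, hJ, hIJ, hval⟩ := Nat.sInf_mem (tcSet_nonempty I y x)
  show I y x ≤ sInf _
  exact hval ▸ hIJ y x

/-- `tcInv I` is transitive. -/
lemma tcInv_trans (I : ℕ → ℕ → ℕ) : IsTransitiveInv (tcInv I) := by
  intro a b c hab hbc
  by_cases h : tcInv I b a = 0
  · exact Or.inl h
  right
  obtain ⟨J, hJ, hIJ, hval⟩ := Nat.sInf_mem (tcSet_nonempty I c a)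
  have h1 : tcInv I b a ≤ J b a := Nat.sInf_le ⟨J, hJ, hIJ, rfl⟩
  have h2 : J b a ≠ 0 := fun h0 => h (Nat.le_zero.1 (h0 ▸ h1))
  rcases hJ a b c hab hbc with h3 | h3
  · exact absurd h3 h2
  · calc tcInv I c b ≤ J c b := Nat.sInf_le ⟨J, hJ, hIJ, rfl⟩
      _ ≤ J c a := h3
      _ = tcInv I c a := by rw [tcInv]; exact hval

/-- If `J` is transitive, dominates `I`, and is dominated by `tcInv I`, then they agree. -/
lemma tcInv_eq_of {I J : ℕ → ℕ → ℕ} (hJ : IsTransitiveInv J) (hIJ : ∀ y x, I y x ≤ J y x)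
    (hlow : ∀ y x, J y x ≤ tcInv I y x) : tcInv I = J := by
  funext y x
  exact le_antisymm (tcInv_le hJ hIJ y x) (hlow y x)

end TCBasics
namespace SDecTree

variable {n : ℕ} {s : ℕ → ℕ} (T : SDecTree n s)

/-! ### Chains -/

private lemma chain_succ_lt {k x m : ℕ}
    (hc : ∀ m' ≤ k, 1 ≤ T.parent^[m'] x ∧ T.parent^[m'] x ≤ n) (hm : m < k) :
    T.parent^[m] x < T.parent^[m + 1] x := by
  have h1 := hc m hm.le
  have h2 := hc (m + 1) hm
  have hs : T.parent^[m + 1] x = T.parent (T.parent^[m] x) :=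
    Function.iterate_succ_apply' _ _ _
  have hcn : T.parent^[m] x < n := by
    rcases lt_or_eq_of_le h1.2 with h | h
    · exact h
    · exfalso
      have : T.parent (T.parent^[m] x) = 0 := T.parent_out _ (Or.inr h.ge)
      rw [hs, this] at h2
      exact absurd h2.1 (by omega)
  calc T.parent^[m] x < T.parent (T.parent^[m] x) := T.parent_gt _ h1.1 hcn
    _ = T.parent^[m + 1] x := hs.symm

private lemma chain_mono {k x : ℕ}
    (hc : ∀ m' ≤ k, 1 ≤ T.parent^[m'] x ∧ T.parent^[m'] x ≤ n) :
    ∀ d m, m + d ≤ k → T.parent^[m] x ≤ T.parent^[m + d] x := by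
  intro d
  induction d with
  | zero => intro m _; exact le_refl _
  | succ d ih =>
      intro m hmd
      have h1 : T.parent^[m] x ≤ T.parent^[m + d] x := ih m (by omega)
      have h2 : T.parent^[m + d] x < T.parent^[m + d + 1] x :=
        chain_succ_lt T hc (by omega)
      rw [show m + (d + 1) = m + d + 1 by omega]
      omega

/-! ### Descend -/

lemma descend_bounds {x y : ℕ} (h : T.Descend x y) :
    1 ≤ x ∧ x ≤ n ∧ 1 ≤ y ∧ y ≤ n := by
  obtain ⟨k, hk, hc⟩ := h
  have h0 := hc 0 (Nat.zero_le _)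
  have hkk := hc k (le_refl _)
  simp only [Function.iterate_zero_apply] at h0
  rw [hk] at hkk
  exact ⟨h0.1, h0.2, hkk.1, hkk.2⟩

lemma descend_refl {x : ℕ} (h1 : 1 ≤ x) (h2 : x ≤ n) : T.Descend x x :=
  ⟨0, rfl, by intro m hm; interval_cases m; simpa using ⟨h1, h2⟩⟩

lemma descend_step {x : ℕ} (h1 : 1 ≤ x) (h2 : x < n) : T.Descend x (T.parent x) := by
  refine ⟨1, by simp, ?_⟩
  intro m hm
  interval_cases m
  · simpa using ⟨h1, h2.le⟩
  · simpa using ⟨(T.parent_gt x h1 h2).le.trans' h1, T.parent_le x h1 h2⟩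

lemma descend_trans {x y z : ℕ} (h1 : T.Descend x y) (h2 : T.Descend y z) :
    T.Descend x z := by
  obtain ⟨k1, hk1, hc1⟩ := h1
  obtain ⟨k2, hk2, hc2⟩ := h2
  refine ⟨k2 + k1, ?_, ?_⟩
  · rw [Function.iterate_add_apply, hk1, hk2]
  · intro m hm
    rcases le_or_gt m k1 with h | h
    · exact hc1 m h
    · have hme : m = (m - k1) + k1 := by omega
      rw [hme, Function.iterate_add_apply, hk1]
      exact hc2 (m - k1) (by omega)

lemma descend_le {x y : ℕ} (h : T.Descend x y) : x ≤ y := by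
  obtain ⟨k, hk, hc⟩ := h
  have := chain_mono T hc k 0 (by omega)
  simpa [hk] using this

lemma descend_total {x y z : ℕ} (h1 : T.Descend x y) (h2 : T.Descend x z) :
    T.Descend y z ∨ T.Descend z y := by
  obtain ⟨k1, hk1, hc1⟩ := h1
  obtain ⟨k2, hk2, hc2⟩ := h2
  rcases le_total k1 k2 with h | h
  · left
    refine ⟨k2 - k1, ?_, ?_⟩
    · rw [← hk1, ← Function.iterate_add_apply, Nat.sub_add_cancel h, hk2]
    · intro m hm
      rw [← hk1, ← Function.iterate_add_apply]
      exact hc2 (m + k1) (by omega)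
  · right
    refine ⟨k1 - k2, ?_, ?_⟩
    · rw [← hk2, ← Function.iterate_add_apply, Nat.sub_add_cancel h, hk1]
    · intro m hm
      rw [← hk2, ← Function.iterate_add_apply]
      exact hc1 (m + k2) (by omega)

lemma descend_parent_last {x y : ℕ} (h : T.Descend x y) (hne : x ≠ y) :
    ∃ c, T.Descend x c ∧ T.parent c = y ∧ 1 ≤ c ∧ c < n := by
  obtain ⟨k, hk, hc⟩ := h
  have hk0 : k ≠ 0 := by
    rintro rfl
    exact hne (by simpa using hk)
  set c := T.parent^[k - 1] x with hcdef
  have hcb := hc (k - 1) (by omega)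
  have hpc : T.parent c = y := by
    have h2 : T.parent^[k] x = T.parent (T.parent^[k - 1] x) := by
      conv_lhs => rw [show k = k - 1 + 1 by omega]
      rw [Function.iterate_succ_apply']
    rw [hcdef, ← h2, hk]
  have hy1 : 1 ≤ y := by
    have := hc k (le_refl _); rw [hk] at this; exact this.1
  have hcn : c < n := by
    rcases lt_or_eq_of_le hcb.2 with h | h
    · exact h
    · exfalso
      have : T.parent c = 0 := T.parent_out _ (Or.inr h.ge)
      omega
  refine ⟨c, ⟨k - 1, rfl, fun m hm => hc m (by omega)⟩, hpc, hcb.1, hcn⟩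

lemma descend_n {x : ℕ} (h1 : 1 ≤ x) (h2 : x ≤ n) : T.Descend x n := by
  have key : ∀ d x, n - x ≤ d → 1 ≤ x → x ≤ n → T.Descend x n := by
    intro d
    induction d with
    | zero =>
        intro x hd h1 h2
        have : x = n := by omega
        subst this
        exact descend_refl T h1 h2
    | succ d ih =>
        intro x hd h1 h2
        rcases eq_or_lt_of_le h2 with h | h
        · subst h; exact descend_refl T h1 h2
        · have hp1 : x < T.parent x := T.parent_gt x h1 h
          have hp2 : T.parent x ≤ n := T.parent_le x h1 h
          exact descend_trans T (descend_step T h1 h)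
            (ih (T.parent x) (by omega) (by omega) hp2)
  exact key (n - x) x (le_refl _) h1 h2

/-! ### InSub -/

lemma insub_parent_lt {y j x : ℕ} (hy : 1 ≤ y) (h : T.InSub y j x) :
    ∃ c, T.Descend x c ∧ T.parent c = y ∧ T.idx c = j ∧ 1 ≤ c ∧ c < n := by
  obtain ⟨c, hd, hp, hi⟩ := h
  have hb := T.descend_bounds hd
  have hcn : c < n := by
    rcases lt_or_eq_of_le hb.2.2.2 with h | h
    · exact h
    · exfalso
      have : T.parent c = 0 := T.parent_out _ (Or.inr h.ge)
      omega
  exact ⟨c, hd, hp, hi, hb.2.2.1, hcn⟩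

lemma insub_descend {y j x : ℕ} (hy : 1 ≤ y) (h : T.InSub y j x) : T.Descend x y := by
  obtain ⟨c, hd, hp, _, hc1, hcn⟩ := T.insub_parent_lt hy h
  exact descend_trans T hd (hp ▸ descend_step T hc1 hcn)

lemma insub_bounds {y j x : ℕ} (hy : 1 ≤ y) (h : T.InSub y j x) :
    1 ≤ x ∧ x < y ∧ y ≤ n ∧ j ≤ s y := by
  obtain ⟨c, hd, hp, hi, hc1, hcn⟩ := T.insub_parent_lt hy h
  have hb := T.descend_bounds hd
  refine ⟨hb.1, ?_, ?_, ?_⟩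
  · have := T.parent_gt c hc1 hcn
    have := T.descend_le hd
    omega
  · exact hp ▸ T.parent_le c hc1 hcn
  · exact hp ▸ hi ▸ T.idx_le c hc1 hcn

lemma insub_zero {j x : ℕ} (h : T.InSub 0 j x) : j = 0 := by
  obtain ⟨c, hd, hp, hi⟩ := h
  have hb := T.descend_bounds hd
  rcases lt_or_eq_of_le hb.2.2.2 with h | h
  · exact absurd (T.parent_gt c hb.2.2.1 h) (by omega)
  · exact hi ▸ T.idx_out c (Or.inr h.ge)

lemma insub_unique {y j j' x : ℕ} (hy : 1 ≤ y) (h : T.InSub y j x) (h' : T.InSub y j' x) :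
    j = j' := by
  obtain ⟨c, hd, hp, hi, hc1, hcn⟩ := T.insub_parent_lt hy h
  obtain ⟨c', hd', hp', hi', hc1', hcn'⟩ := T.insub_parent_lt hy h'
  have key : ∀ u u' : ℕ, T.Descend u u' → T.parent u = y → T.parent u' = y →
      1 ≤ u → u < n → u' < n → u = u' := by
    intro u u' hdu hpu hpu' hu1 hun hun'
    by_contra hne
    obtain ⟨k, hk, hc⟩ := hdu
    have hk0 : k ≠ 0 := by rintro rfl; exact hne (by simpa using hk)
    have h1 : T.parent^[1] u = y := by simpa using hpu
    have : T.Descend y u' := by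
      refine ⟨k - 1, ?_, ?_⟩
      · rw [← h1, ← Function.iterate_add_apply]
        have : k - 1 + 1 = k := by omega
        rw [this, hk]
      · intro m hm
        rw [← h1, ← Function.iterate_add_apply]
        exact hc (m + 1) (by omega)
    have hyu : y ≤ u' := T.descend_le this
    have : u' < T.parent u' := T.parent_gt u' (by omega) hun'
    omega
  rcases T.descend_total hd hd' with h | h
  · have := key c c' h hp hp' hc1 hcn hcn'
    rw [← hi, ← hi', this]
  · have := key c' c h hp' hp hc1' hcn' hcn
    rw [← hi, ← hi', this]

lemma descend_insub {x w y j : ℕ} (hd : T.Descend x w) (h : T.InSub y j w) :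
    T.InSub y j x := by
  obtain ⟨c, hdc, hp, hi⟩ := h
  exact ⟨c, T.descend_trans hd hdc, hp, hi⟩

lemma insub_of_descend_ne {x y : ℕ} (h : T.Descend x y) (hne : x ≠ y) :
    ∃ j, T.InSub y j x := by
  obtain ⟨c, hd, hp, _, _⟩ := T.descend_parent_last h hne
  exact ⟨T.idx c, c, hd, hp, rfl⟩

/-! ### card -/

lemma card_insub {y j x : ℕ} (hy : 1 ≤ y) (h : T.InSub y j x) : T.card y x = j := by
  rw [card, dif_pos ⟨j, h⟩]
  exact T.insub_unique hy (Exists.choose_spec (⟨j, h⟩ : ∃ j, T.InSub y j x)) h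

lemma card_out {y x : ℕ} (h : ¬(1 ≤ x ∧ x < y ∧ y ≤ n)) : T.card y x = 0 := by
  rw [card]
  split_ifs with h1 h2
  · rcases Nat.eq_zero_or_pos y with hy | hy
    · subst hy
      exact T.insub_zero (Exists.choose_spec h1)
    · have := T.insub_bounds hy (Exists.choose_spec h1)
      exact absurd ⟨this.1, this.2.1, this.2.2.1⟩ h
  · exact absurd ⟨h2.1, h2.2.1, h2.2.2.1⟩ h
  · rfl

lemma card_le_s (y x : ℕ) : T.card y x ≤ s y := by
  rw [card]
  split_ifs with h1 h2
  · rcases Nat.eq_zero_or_pos y with hy | hy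
    · subst hy
      simp [T.insub_zero (Exists.choose_spec h1)]
    · exact (T.insub_bounds hy (Exists.choose_spec h1)).2.2.2
  · exact le_refl _
  · exact Nat.zero_le _

lemma card_pos_bounds {y x : ℕ} (h : T.card y x ≠ 0) : 1 ≤ x ∧ x < y ∧ y ≤ n := by
  by_contra hc
  exact h (T.card_out hc)

/-! ### LeftOf -/

lemma leftof_z_pos {x y : ℕ} (h : T.LeftOf x y) :
    ∃ z j₁ j₂, 1 ≤ z ∧ j₁ < j₂ ∧ T.InSub z j₁ x ∧ T.InSub z j₂ y := by
  obtain ⟨z, j1, j2, hj, h1, h2⟩ := h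
  rcases Nat.eq_zero_or_pos z with hz | hz
  · subst hz
    have := T.insub_zero h2
    omega
  · exact ⟨z, j1, j2, hz, hj, h1, h2⟩

lemma not_insub_of_leftof {x y j : ℕ} (h : T.LeftOf x y) : ¬ T.InSub y j x := by
  intro hin
  obtain ⟨z, j1, j2, hz, hj, h1, h2⟩ := T.leftof_z_pos h
  have hy1 : 1 ≤ y := (T.insub_bounds hz h2).1
  have hd : T.Descend x y := T.insub_descend hy1 hin
  have : T.InSub z j2 x := T.descend_insub hd h2
  have := T.insub_unique hz h1 this
  omega

lemma not_insub_of_rightof {x y j : ℕ} (h : T.LeftOf y x) : ¬ T.InSub y j x := by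
  intro hin
  obtain ⟨z, j1, j2, hz, hj, h1, h2⟩ := T.leftof_z_pos h
  have hy1 : 1 ≤ y := (T.insub_bounds hz h1).1
  have hd : T.Descend x y := T.insub_descend hy1 hin
  have : T.InSub z j1 x := T.descend_insub hd h1
  have := T.insub_unique hz h2 this
  omega

lemma leftof_of_descend_left {x w y : ℕ} (hd : T.Descend x w) (h : T.LeftOf w y) :
    T.LeftOf x y := by
  obtain ⟨z, j1, j2, hj, h1, h2⟩ := h
  exact ⟨z, j1, j2, hj, T.descend_insub hd h1, h2⟩

lemma leftof_of_descend_right {x w y : ℕ} (hd : T.Descend y w) (h : T.LeftOf x w) :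
    T.LeftOf x y := by
  obtain ⟨z, j1, j2, hj, h1, h2⟩ := h
  exact ⟨z, j1, j2, hj, h1, T.descend_insub hd h2⟩

lemma leftof_antisymm {x y : ℕ} (h : T.LeftOf x y) (h' : T.LeftOf y x) : False := by
  obtain ⟨z, j1, j2, hz, hj, h1, h2⟩ := T.leftof_z_pos h
  obtain ⟨z', j1', j2', hz', hj', h1', h2'⟩ := T.leftof_z_pos h'
  have hdx : T.Descend x z := T.insub_descend hz h1
  have hdx' : T.Descend x z' := T.insub_descend hz' h2'
  have hdy : T.Descend y z := T.insub_descend hz h2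
  have hdy' : T.Descend y z' := T.insub_descend hz' h1'
  rcases T.descend_total hdx hdx' with hzz | hzz
  · by_cases he : z = z'
    · subst he
      have e1 := T.insub_unique hz h1 h2'
      have e2 := T.insub_unique hz h2 h1'
      omega
    · obtain ⟨jz, hjz⟩ := T.insub_of_descend_ne hzz he
      have e1 := T.insub_unique hz' (T.descend_insub hdx hjz) h2'
      have e2 := T.insub_unique hz' (T.descend_insub hdy hjz) h1'
      omega
  · by_cases he : z' = z
    · subst he
      have e1 := T.insub_unique hz h1 h2'
      have e2 := T.insub_unique hz h2 h1'
      omega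
    · obtain ⟨jz, hjz⟩ := T.insub_of_descend_ne hzz he
      have e1 := T.insub_unique hz (T.descend_insub hdx' hjz) h1
      have e2 := T.insub_unique hz (T.descend_insub hdy' hjz) h2
      omega

lemma card_of_leftof {x y : ℕ} (h : T.LeftOf x y) : T.card y x = 0 := by
  rw [card]
  split_ifs with h1 h2
  · exact absurd (Exists.choose_spec h1) (T.not_insub_of_leftof h)
  · exact absurd h h2.2.2.2
  · rfl

lemma card_of_rightof {x y : ℕ} (h1 : 1 ≤ x) (h2 : x < y) (h3 : y ≤ n)
    (h : T.LeftOf y x) : T.card y x = s y := by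
  rw [card]
  split_ifs with ha hb
  · exact absurd (Exists.choose_spec ha) (T.not_insub_of_rightof h)
  · rfl
  · exact absurd ⟨h1, h2, h3, fun hl => T.leftof_antisymm hl h⟩ hb

/-! ### Trichotomy -/

lemma pos_cases {x y : ℕ} (h1 : 1 ≤ x) (h2 : x < y) (h3 : y ≤ n) :
    T.Descend x y ∨ T.LeftOf x y ∨ T.LeftOf y x := by
  by_cases hd : T.Descend x y
  · exact Or.inl hd
  right
  have hy1 : 1 ≤ y := by omega
  have hnx : T.Descend x n := T.descend_n h1 (by omega)
  have hny : T.Descend y n := T.descend_n hy1 h3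
  obtain ⟨m, hmx', hmy', hmmin⟩ : ∃ m, T.Descend x m ∧ T.Descend y m ∧
      ∀ z, T.Descend x z → T.Descend y z → m ≤ z := by
    have hSne : {z | T.Descend x z ∧ T.Descend y z}.Nonempty := ⟨n, hnx, hny⟩
    exact ⟨sInf {z | T.Descend x z ∧ T.Descend y z}, (Nat.sInf_mem hSne).1,
      (Nat.sInf_mem hSne).2, fun z h1 h2 => Nat.sInf_le ⟨h1, h2⟩⟩
  have hmx : m ≠ x := by
    rintro rfl
    exact absurd (T.descend_le hmy') (by omega)
  have hmy : m ≠ y := fun he => hd (he ▸ hmx')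
  obtain ⟨cx, hcx, hpcx, hcx1, hcxn⟩ := T.descend_parent_last hmx' (Ne.symm hmx)
  obtain ⟨cy, hcy, hpcy, hcy1, hcyn⟩ := T.descend_parent_last hmy' (Ne.symm hmy)
  have hcne : cx ≠ cy := by
    rintro rfl
    have h1 : m ≤ cx := hmmin cx hcx hcy
    have h2 : cx < T.parent cx := T.parent_gt cx hcx1 hcxn
    omega
  have hidx : T.idx cx ≠ T.idx cy := by
    intro he
    exact hcne (T.slot_inj cx cy hcx1 hcxn hcy1 hcyn (hpcx.trans hpcy.symm) he)
  have hix : T.InSub m (T.idx cx) x := ⟨cx, hcx, hpcx, rfl⟩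
  have hiy : T.InSub m (T.idx cy) y := ⟨cy, hcy, hpcy, rfl⟩
  rcases lt_or_gt_of_ne hidx with h | h
  · exact Or.inl ⟨m, _, _, h, hix, hiy⟩
  · exact Or.inr ⟨m, _, _, h, hiy, hix⟩

lemma card_descend {x y : ℕ} (hd : T.Descend x y) (hne : x ≠ y) :
    T.InSub y (T.card y x) x := by
  obtain ⟨j, hj⟩ := T.insub_of_descend_ne hd hne
  have hy1 : 1 ≤ y := (T.descend_bounds hd).2.2.1
  rwa [T.card_insub hy1 hj]

/-! ### The key subtree lemma -/

lemma card_eq_of_descend {x w z : ℕ} (hd : T.Descend x w) (hwz : w < z) :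
    T.card z x = T.card z w := by
  have hb := T.descend_bounds hd
  rcases le_or_gt z n with hzn | hzn
  · rcases T.pos_cases hb.2.2.1 hwz hzn with h | h | h
    · have hne : w ≠ z := by omega
      have hin := T.card_descend h hne
      have : T.InSub z (T.card z w) x := T.descend_insub hd hin
      exact (T.card_insub (by omega) this).trans rfl
    · rw [T.card_of_leftof h, T.card_of_leftof (T.leftof_of_descend_left hd h)]
    · rw [T.card_of_rightof hb.2.2.1 hwz hzn h]
      have hx : T.LeftOf z x := T.leftof_of_descend_right hd h
      have hxw : x ≤ w := T.descend_le hd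
      exact T.card_of_rightof hb.1 (by omega) hzn hx
  · rw [T.card_out (by omega), T.card_out (by omega)]

/-! ### Transitivity of tree inversion sets -/

lemma card_transitive : IsTransitiveInv T.card := by
  intro p q r hpq hqr
  by_cases h0 : T.card q p = 0
  · exact Or.inl h0
  right
  obtain ⟨hp1, hpq', hqn⟩ := T.card_pos_bounds h0
  rcases le_or_gt r n with hrn | hrn
  swap
  · rw [T.card_out (by omega)]
    exact Nat.zero_le _
  rcases T.pos_cases hp1 hpq hqn with h | h | h
  · exact le_of_eq (T.card_eq_of_descend h hqr).symm
  · exact absurd (T.card_of_leftof h) h0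
  · -- q is left of p
    rcases T.pos_cases (by omega) hqr hrn with h2 | h2 | h2
    · -- q in subtree of r
      have hne : q ≠ r := by omega
      have hin := T.card_descend h2 hne
      set m := T.card r q with hmdef
      rcases T.pos_cases hp1 (by omega) hrn with h3 | h3 | h3
      · -- p in subtree of r
        have hne3 : p ≠ r := by omega
        have hin3 := T.card_descend h3 hne3
        set m' := T.card r p with hm'def
        rcases lt_trichotomy m' m with hlt | heq | hgt
        · exact absurd ⟨r, m', m, hlt, hin3, hin⟩ (fun hl => T.leftof_antisymm hl h)
        · omega
        · omega
      · -- p left of r : impossible since q ∈ T^r would make p left of q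
        exfalso
        obtain ⟨z0, u, v, hz0, huv, hiu, hiv⟩ := T.leftof_z_pos h3
        have : T.InSub z0 v q := T.descend_insub h2 hiv
        exact T.leftof_antisymm ⟨z0, u, v, huv, hiu, this⟩ h
      · -- r left of p
        rw [T.card_of_rightof hp1 (by omega) hrn h3]
        exact (T.insub_bounds (by omega) hin).2.2.2
    · rw [T.card_of_leftof h2]
      exact Nat.zero_le _
    · -- r left of q; derive r left of p
      rw [T.card_of_rightof (by omega) hqr hrn h2]
      obtain ⟨z0, u, v, hz0, huv, hiu, hiv⟩ := T.leftof_z_pos h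
      obtain ⟨z1, u1, v1, hz1, huv1, hiu1, hiv1⟩ := T.leftof_z_pos h2
      have hdq0 : T.Descend q z0 := T.insub_descend hz0 hiu
      have hdq1 : T.Descend q z1 := T.insub_descend hz1 hiv1
      have hlrp : T.LeftOf r p := by
        rcases T.descend_total hdq0 hdq1 with hzz | hzz
        · by_cases he : z0 = z1
          · rw [← he] at hiu1 hiv1
            have e1 := T.insub_unique hz0 hiu hiv1
            exact ⟨z0, u1, v, by omega, hiu1, hiv⟩
          · obtain ⟨jz, hjz⟩ := T.insub_of_descend_ne hzz he
            have e1 := T.insub_unique hz1 (T.descend_insub hdq0 hjz) hiv1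
            have hdp : T.Descend p z0 := T.insub_descend hz0 hiv
            have : T.InSub z1 jz p := T.descend_insub hdp hjz
            exact ⟨z1, u1, jz, by omega, hiu1, this⟩
        · by_cases he : z1 = z0
          · rw [he] at hiu1 hiv1
            have e1 := T.insub_unique hz0 hiu hiv1
            exact ⟨z0, u1, v, by omega, hiu1, hiv⟩
          · obtain ⟨jz, hjz⟩ := T.insub_of_descend_ne hzz he
            have e1 := T.insub_unique hz0 (T.descend_insub hdq1 hjz) hiu
            have hdr : T.Descend r z1 := T.insub_descend hz1 hiu1
            have : T.InSub z0 jz r := T.descend_insub hdr hjz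
            exact ⟨z0, jz, v, by omega, this, hiv⟩
      rw [T.card_of_rightof hp1 (by omega) hrn hlrp]

end SDecTree
namespace SDecTree

variable {n : ℕ} {s : ℕ → ℕ} (T : SDecTree n s)

lemma ascent_card {a b : ℕ} (hab : T.TreeAscent a b) :
    T.InSub b (T.card b a) a ∧ T.card b a < s b := by
  obtain ⟨_, hlt, hbn, ⟨i, hi, hin⟩, _, _⟩ := hab
  rw [T.card_insub (by omega) hin]
  exact ⟨hin, hi⟩

lemma minus0_descend {a x : ℕ} (ha1 : 1 ≤ a) (han : a ≤ n) (h : T.InSubMinus0 a x) :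
    T.Descend x a := by
  rcases h with rfl | ⟨j, hj, hin⟩
  · exact T.descend_refl ha1 han
  · exact T.insub_descend ha1 hin

lemma minus0_le {a x : ℕ} (ha1 : 1 ≤ a) (h : T.InSubMinus0 a x) : x ≤ a := by
  rcases h with rfl | ⟨j, hj, hin⟩
  · exact le_refl _
  · exact (T.insub_bounds ha1 hin).2.1.le

lemma minus0_closed {a y j x : ℕ} (ha1 : 1 ≤ a) (h : T.InSubMinus0 a y)
    (hin : T.InSub y j x) (hj : 0 < j) : T.InSubMinus0 a x := by
  rcases h with rfl | ⟨j', hj', hin'⟩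
  · exact Or.inr ⟨j, hj, hin⟩
  · have hy1 : 1 ≤ y := (T.insub_bounds ha1 hin').1
    exact Or.inr ⟨j', hj', T.descend_insub (T.insub_descend hy1 hin) hin'⟩

lemma card_minus0 {a z x : ℕ} (ha1 : 1 ≤ a) (han : a ≤ n) (haz : a < z)
    (h : T.InSubMinus0 a x) : T.card z x = T.card z a :=
  T.card_eq_of_descend (T.minus0_descend ha1 han h) haz

/-- The climbing lemma: if `y ∈ T^a∖0` and `x` is right of `y`, then either `x ∈ T^a∖0`
or `#(b,x) ≥ #(b,a)+1`. -/
lemma ascent_spine {a b x y : ℕ} (hab : T.TreeAscent a b) (h : T.InSubMinus0 a y)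
    (hxy : x < y) (hl : T.LeftOf y x) :
    T.InSubMinus0 a x ∨ T.card b a + 1 ≤ T.card b x := by
  have ha1 : 1 ≤ a := hab.1
  have halb : a < b := hab.2.1
  have hbn : b ≤ n := hab.2.2.1
  obtain ⟨hiab, hilt⟩ := T.ascent_card hab
  obtain ⟨z0, p, q, hz0, hpq, hpy, hqx⟩ := T.leftof_z_pos hl
  have hq1 : 1 ≤ q := by omega
  have hdya : T.Descend y a := T.minus0_descend ha1 (by omega) h
  have hdyz0 : T.Descend y z0 := T.insub_descend hz0 hpy
  by_cases hz0a : z0 = a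
  · exact Or.inl (Or.inr ⟨q, hq1, hz0a ▸ hqx⟩)
  rcases T.descend_total hdya hdyz0 with hd | hd
  · -- a strictly below z0
    obtain ⟨pa, hpa⟩ := T.insub_of_descend_ne hd (fun he => hz0a he.symm)
    have hpap : pa = p := T.insub_unique hz0 (T.descend_insub hdya hpa) hpy
    have hdab : T.Descend a b := T.insub_descend (by omega) hiab
    by_cases hz0b : z0 = b
    · subst hz0b
      have hpi : pa = T.card z0 a := T.insub_unique hz0 hpa hiab
      have hxb : T.card z0 x = q := T.card_insub hz0 hqx
      omega
    rcases T.descend_total hd hdab with hd2 | hd2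
    · -- z0 strictly between a and b
      have haz0 : a < z0 := by
        have h1 := T.descend_le hd
        omega
      have hz0b' : z0 < b := by
        have h1 := T.descend_le hd2
        omega
      have h2 := hab.2.2.2.2.1 z0 pa haz0 hz0b' hpa
      have h3 := (T.insub_bounds hz0 hqx).2.2.2
      omega
    · -- b strictly below z0
      obtain ⟨jb, hjb⟩ := T.insub_of_descend_ne hd2 (fun he => hz0b he.symm)
      have hja : T.InSub z0 jb a := T.descend_insub hdab hjb
      have hjbp : jb = p := hpap ▸ T.insub_unique hz0 hja hpa
      have hlbx : T.LeftOf b x := ⟨z0, p, q, hpq, hjbp ▸ hjb, hqx⟩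
      have hxa : x < b := by
        have h1 := T.descend_le hdya
        have h2 := T.minus0_le ha1 h
        omega
      have hx1 : 1 ≤ x := (T.insub_bounds hz0 hqx).1
      right
      rw [T.card_of_rightof hx1 hxa hbn hlbx]
      omega
  · -- z0 strictly below a
    obtain ⟨jz, hjz⟩ := T.insub_of_descend_ne hd hz0a
    have hyne : y ≠ a := by
      rintro rfl
      have h1 := T.descend_le hdyz0
      have h2 := (T.insub_bounds ha1 hjz).2.1
      omega
    obtain ⟨jy, hjy0, hjy⟩ : ∃ j', 0 < j' ∧ T.InSub a j' y := by
      rcases h with rfl | hh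
      · exact absurd rfl hyne
      · exact hh
    have hjy' : T.InSub a jz y := T.descend_insub hdyz0 hjz
    have hje : jz = jy := T.insub_unique ha1 hjy' hjy
    have hdxz0 : T.Descend x z0 := T.insub_descend hz0 hqx
    exact Or.inl (Or.inr ⟨jz, hje ▸ hjy0, T.descend_insub hdxz0 hjz⟩)

/-- The explicit rotation formula: `(inv T + (b,a))^tc = inv T` plus one extra copy of
`(b,e)` for every `e ∈ T^a∖0`. -/
lemma rotation_formula {a b : ℕ} (hab : T.TreeAscent a b) :
    tcInv (addInv s T.card b a) =
      fun y x => T.card y x + (if y = b ∧ T.InSubMinus0 a x then 1 else 0) := by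
  have ha1 : 1 ≤ a := hab.1
  have halb : a < b := hab.2.1
  have hbn : b ≤ n := hab.2.2.1
  obtain ⟨hiab, hilt⟩ := T.ascent_card hab
  set J := fun y x => T.card y x + (if y = b ∧ T.InSubMinus0 a x then 1 else 0) with hJ
  have hJb : ∀ x, T.InSubMinus0 a x → J b x = T.card b a + 1 := by
    intro x hx
    show T.card b x + (if b = b ∧ T.InSubMinus0 a x then 1 else 0) = T.card b a + 1
    rw [if_pos (⟨rfl, hx⟩ : b = b ∧ T.InSubMinus0 a x),
      T.card_minus0 ha1 (by omega) halb hx]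
  have hJoth : ∀ y x, ¬(y = b ∧ T.InSubMinus0 a x) → J y x = T.card y x := by
    intro y x hyx
    show T.card y x + (if y = b ∧ T.InSubMinus0 a x then 1 else 0) = T.card y x
    rw [if_neg hyx]
    omega
  have hJge : ∀ y x, T.card y x ≤ J y x := by
    intro y x
    show T.card y x ≤ T.card y x + (if y = b ∧ T.InSubMinus0 a x then 1 else 0)
    exact Nat.le_add_right _ _
  have hJtrans : IsTransitiveInv J := by
    intro p q r hpq hqr
    by_cases hJ0 : J q p = 0
    · exact Or.inl hJ0
    right
    by_cases hqb : q = b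
    · have hrb' : r ≠ b := by omega
      rw [hJoth r q (fun hh => hrb' hh.1), hJoth r p (fun hh => hrb' hh.1)]
      by_cases hcp : T.card q p = 0
      · have hip : T.InSubMinus0 a p := by
          by_contra hip
          refine hJ0 ?_
          rw [hJoth q p (fun hh => hip hh.2), hcp]
        have hdpb : T.Descend p q := by
          rw [hqb]
          exact T.descend_trans (T.minus0_descend ha1 (by omega) hip)
            (T.insub_descend (by omega) hiab)
        exact le_of_eq (T.card_eq_of_descend hdpb hqr).symm
      · rcases T.card_transitive p q r hpq hqr with h | h
        · exact absurd h hcp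
        · exact h
    · have hcqp : T.card q p ≠ 0 := by
        intro h
        refine hJ0 ?_
        rw [hJoth q p (fun hh => hqb hh.1), h]
      by_cases hrb : r = b
      · rw [hrb]
        have hqb' : q < b := by omega
        by_cases hq : T.InSubMinus0 a q
        · by_cases hp : T.InSubMinus0 a p
          · rw [hJb q hq, hJb p hp]
          · rw [hJb q hq, hJoth b p (fun hh => hp hh.2)]
            obtain ⟨hp1, hplt, hqn⟩ := T.card_pos_bounds hcqp
            rcases T.pos_cases hp1 hpq hqn with h | h | h
            · have hne : p ≠ q := by omega
              have hin := T.card_descend h hne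
              exact absurd (T.minus0_closed ha1 hq hin (by omega)) hp
            · exact absurd (T.card_of_leftof h) hcqp
            · rcases T.ascent_spine hab hq hpq h with h2 | h2
              · exact absurd h2 hp
              · exact h2
        · rw [hJoth b q (fun hh => hq hh.2)]
          rcases T.card_transitive p q b hpq hqb' with h | h
          · exact absurd h hcqp
          · exact h.trans (hJge b p)
      · rw [hJoth r q (fun hh => hrb hh.1), hJoth r p (fun hh => hrb hh.1)]
        rcases T.card_transitive p q r hpq hqr with h | h
        · exact absurd h hcqp
        · exact h
  have haddJ : ∀ y x, addInv s T.card b a y x ≤ J y x := by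
    intro y x
    show (if y = b ∧ x = a then min (T.card y x + 1) (s y) else T.card y x) ≤ J y x
    split_ifs with h
    · obtain ⟨rfl, rfl⟩ := h
      rw [hJb x (Or.inl rfl)]
      omega
    · exact hJge y x
  have hlow : ∀ y x, J y x ≤ tcInv (addInv s T.card b a) y x := by
    intro y x
    have haddc : ∀ y' x', T.card y' x' ≤ addInv s T.card b a y' x' := by
      intro y' x'
      show T.card y' x' ≤ (if y' = b ∧ x' = a then min (T.card y' x' + 1) (s y') else T.card y' x')
      split_ifs with h
      · obtain ⟨rfl, rfl⟩ := h
        have := T.card_le_s y' x'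
        omega
      · exact le_refl _
    by_cases hyx : y = b ∧ T.InSubMinus0 a x
    · obtain ⟨rfl, hx⟩ := hyx
      rw [hJb x hx]
      have h2 : T.card y a + 1 ≤ tcInv (addInv s T.card y a) y a := by
        have he : addInv s T.card y a y a = T.card y a + 1 := by
          show (if y = y ∧ a = a then min (T.card y a + 1) (s y) else T.card y a) = T.card y a + 1
          rw [if_pos ⟨rfl, rfl⟩]
          omega
        rw [← he]
        exact le_tcInv _ y a
      rcases hx with rfl | ⟨j, hj, hjx⟩
      · exact h2
      · have hx1 : 1 ≤ x := (T.insub_bounds ha1 hjx).1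
        have hxa : x < a := (T.insub_bounds ha1 hjx).2.1
        have h1 : 0 < tcInv (addInv s T.card y a) a x := by
          calc 0 < j := hj
            _ = T.card a x := (T.card_insub ha1 hjx).symm
            _ ≤ addInv s T.card y a a x := haddc a x
            _ ≤ tcInv (addInv s T.card y a) a x := le_tcInv _ a x
        rcases tcInv_trans (addInv s T.card y a) x a y hxa halb with h | h
        · omega
        · omega
    · rw [hJoth y x hyx]
      exact (haddc y x).trans (le_tcInv _ y x)
  exact tcInv_eq_of hJtrans haddJ hlow

end SDecTree
namespace SDecTree

variable {n : ℕ} {s : ℕ → ℕ}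

/-- The extended column set for the row `b` increment in the join of the two rotations
along `(a,b)` and `(c,d)`. -/
def Cbset (T : SDecTree n s) (a c d x : ℕ) : Prop :=
  T.InSubMinus0 a x ∨ ((d = a ∧ T.InSub a 0 c) ∧ T.InSubMinus0 c x)

/-- The explicit inversion multiset of the join of the two rotations. -/
noncomputable def Kfun (T : SDecTree n s) (a b c d : ℕ) : ℕ → ℕ → ℕ := fun y x =>
  T.card y x + (if y = b ∧ T.Cbset a c d x then 1 else 0)
    + (if y = d ∧ T.Cbset c a b x then 1 else 0)

lemma Kfun_comm (T : SDecTree n s) (a b c d : ℕ) :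
    T.Kfun a b c d = T.Kfun c d a b := by
  funext y x
  show T.card y x + (if y = b ∧ T.Cbset a c d x then 1 else 0)
      + (if y = d ∧ T.Cbset c a b x then 1 else 0)
    = T.card y x + (if y = d ∧ T.Cbset c a b x then 1 else 0)
      + (if y = b ∧ T.Cbset a c d x then 1 else 0)
  omega

variable (T : SDecTree n s) {a b c d : ℕ}

/-- Distinct tree ascents have distinct first components. -/
lemma ascents_ne (hab : T.TreeAscent a b) (hcd : T.TreeAscent c d)
    (hne : (a, b) ≠ (c, d)) : a ≠ c := by
  rintro rfl
  obtain ⟨hiab, hilt⟩ := T.ascent_card hab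
  obtain ⟨hiad, hklt⟩ := T.ascent_card hcd
  have hbd : b ≠ d := fun h => hne (by rw [h])
  rcases lt_or_gt_of_ne hbd with h | h
  · have := hcd.2.2.2.2.1 b (T.card b a) hab.2.1 h hiab
    omega
  · have := hab.2.2.2.2.1 d (T.card d a) hcd.2.1 h hiad
    omega

lemma cb_descend (hab : T.TreeAscent a b) (hcd : T.TreeAscent c d) {x : ℕ}
    (h : T.Cbset a c d x) : T.Descend x a := by
  have ha1 : 1 ≤ a := hab.1
  have han : a ≤ n := by
    have := hab.2.1; have := hab.2.2.1; omega
  rcases h with h | ⟨⟨hda, hc0⟩, hx⟩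
  · exact T.minus0_descend ha1 han h
  · have hc1 : 1 ≤ c := hcd.1
    have hcn : c ≤ n := by
      have := hcd.2.1; have := hcd.2.2.1; omega
    exact T.descend_trans (T.minus0_descend hc1 hcn hx) (T.insub_descend ha1 hc0)

lemma cb_le (hab : T.TreeAscent a b) (hcd : T.TreeAscent c d) {x : ℕ}
    (h : T.Cbset a c d x) : x ≤ a := T.descend_le (T.cb_descend hab hcd h)

lemma cb_card (hab : T.TreeAscent a b) (hcd : T.TreeAscent c d) {x z : ℕ}
    (h : T.Cbset a c d x) (hz : a < z) : T.card z x = T.card z a :=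
  T.card_eq_of_descend (T.cb_descend hab hcd h) hz

lemma cb_pos (hab : T.TreeAscent a b) (hcd : T.TreeAscent c d) {x : ℕ}
    (h : T.Cbset a c d x) : 1 ≤ x := (T.descend_bounds (T.cb_descend hab hcd h)).1

lemma cb_closed (hab : T.TreeAscent a b) (hcd : T.TreeAscent c d) {x y j : ℕ}
    (h : T.Cbset a c d y) (hin : T.InSub y j x) (hj : 0 < j) : T.Cbset a c d x := by
  have ha1 : 1 ≤ a := hab.1
  have hc1 : 1 ≤ c := hcd.1
  rcases h with h | ⟨hF, hx⟩
  · exact Or.inl (T.minus0_closed ha1 h hin hj)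
  · exact Or.inr ⟨hF, T.minus0_closed hc1 hx hin hj⟩

/-- If `c` is strictly inside `T^a` and `a < d` then `c ∈ T^a_0`. -/
lemma nested_ac (hab : T.TreeAscent a b) (hcd : T.TreeAscent c d)
    (hd : T.Descend c a) (hne' : c ≠ a) (hlt : a < d) : T.InSub a 0 c := by
  obtain ⟨j, hj⟩ := T.insub_of_descend_ne hd hne'
  have hca : c < a := (T.insub_bounds hab.1 hj).2.1
  have hjs : j = s a := hcd.2.2.2.2.1 a j hca hlt hj
  rcases Nat.eq_zero_or_pos (s a) with h0 | h0
  · have hj0 : j = 0 := by omega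
    rwa [hj0] at hj
  · exact absurd hj (hjs ▸ hab.2.2.2.2.2 h0 c)

/-- When `b = d`, the two column sets are disjoint. -/
lemma not_both (hab : T.TreeAscent a b) (hcd : T.TreeAscent c d)
    (hne : (a, b) ≠ (c, d)) (hbd : b = d) {x : ℕ} :
    ¬(T.Cbset a c d x ∧ T.Cbset c a b x) := by
  have hac : a ≠ c := T.ascents_ne hab hcd hne
  have ha1 : 1 ≤ a := hab.1
  have hc1 : 1 ≤ c := hcd.1
  rintro ⟨h1, h2⟩
  -- reduce both to plain InSubMinus0
  have h1' : T.InSubMinus0 a x := by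
    rcases h1 with h | ⟨⟨hda, _⟩, _⟩
    · exact h
    · exact absurd (hbd ▸ hda : b = a) (by have := hab.2.1; omega)
  have h2' : T.InSubMinus0 c x := by
    rcases h2 with h | ⟨⟨hbc, _⟩, _⟩
    · exact h
    · exact absurd (hbd ▸ hbc : d = c) (by have := hcd.2.1; omega)
  have hda : T.Descend x a := T.cb_descend hab hcd (Or.inl h1')
  have hdc : T.Descend x c := T.cb_descend hcd hab (Or.inl h2')
  rcases T.descend_total hda hdc with hd | hd
  · -- a strictly below c
    have hin0 : T.InSub c 0 a := T.nested_ac hcd hab hd hac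
      (by have h1 := hcd.2.1; omega)
    rcases h2' with rfl | ⟨j, hj, hjx⟩
    · rcases h1' with h | ⟨j, hj, hjx⟩
      · exact hac h.symm
      · have h1 := (T.insub_bounds ha1 hjx).2.1
        have h2 := T.descend_le hd
        omega
    · rcases h1' with rfl | ⟨j', hj', hjx'⟩
      · have := T.insub_unique hc1 hjx hin0
        omega
      · have hdxa : T.Descend x a := T.minus0_descend ha1
          (by have h1 := hab.2.1; have h2 := hab.2.2.1; omega) (Or.inr ⟨j', hj', hjx'⟩)
        have hx0 : T.InSub c 0 x := T.descend_insub hdxa hin0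
        have := T.insub_unique hc1 hjx hx0
        omega
  · -- c strictly below a
    have hca : c ≠ a := fun h => hac h.symm
    have hin0 : T.InSub a 0 c := T.nested_ac hab hcd hd hca
      (by have h1 := hab.2.1; omega)
    rcases h1' with rfl | ⟨j, hj, hjx⟩
    · rcases h2' with h | ⟨j, hj, hjx⟩
      · exact hac h
      · have h1 := (T.insub_bounds hc1 hjx).2.1
        have h2 := T.descend_le hd
        omega
    · rcases h2' with rfl | ⟨j', hj', hjx'⟩
      · have := T.insub_unique ha1 hjx hin0
        omega
      · have hdxc : T.Descend x c := T.minus0_descend hc1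
          (by have h1 := hcd.2.1; have h2 := hcd.2.2.1; omega) (Or.inr ⟨j', hj', hjx'⟩)
        have hx0 : T.InSub a 0 x := T.descend_insub hdxc hin0
        have := T.insub_unique ha1 hjx hx0
        omega

/-- The pair `(d,c)` is not incremented by the first rotation. -/
lemma not_dbac (hab : T.TreeAscent a b) (hcd : T.TreeAscent c d)
    (hne : (a, b) ≠ (c, d)) : ¬(d = b ∧ T.InSubMinus0 a c) := by
  have hac : a ≠ c := T.ascents_ne hab hcd hne
  rintro ⟨hdb, h⟩
  rcases h with rfl | ⟨j, hj, hjx⟩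
  · exact hac rfl
  · have hd : T.Descend c a := T.insub_descend hab.1 hjx
    have hca : c ≠ a := fun h => hac h.symm
    have hin0 : T.InSub a 0 c := T.nested_ac hab hcd hd hca (hdb ▸ hab.2.1)
    have := T.insub_unique hab.1 hjx hin0
    omega

end SDecTree
namespace SDecTree

variable {n : ℕ} {s : ℕ → ℕ} (T : SDecTree n s)

lemma k_ge_card (a b c d y x : ℕ) : T.card y x ≤ T.Kfun a b c d y x := by
  show T.card y x ≤ T.card y x + _ + _
  omega

lemma k_oth {a b c d y x : ℕ} (h1 : ¬(y = b ∧ T.Cbset a c d x))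
    (h2 : ¬(y = d ∧ T.Cbset c a b x)) : T.Kfun a b c d y x = T.card y x := by
  show T.card y x + _ + _ = T.card y x
  rw [if_neg h1, if_neg h2]
  omega

variable {a b c d : ℕ}

lemma k_card_b (hab : T.TreeAscent a b) (hcd : T.TreeAscent c d)
    (hne : (a, b) ≠ (c, d)) {x : ℕ} (hx : T.Cbset a c d x) :
    T.Kfun a b c d b x = T.card b a + 1 := by
  show T.card b x + _ + _ = T.card b a + 1
  rw [if_pos ⟨rfl, hx⟩, if_neg (fun hh : b = d ∧ T.Cbset c a b x =>
    T.not_both hab hcd hne hh.1 ⟨hx, hh.2⟩), T.cb_card hab hcd hx hab.2.1]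

lemma k_card_d (hab : T.TreeAscent a b) (hcd : T.TreeAscent c d)
    (hne : (a, b) ≠ (c, d)) {x : ℕ} (hx : T.Cbset c a b x) :
    T.Kfun a b c d d x = T.card d c + 1 := by
  rw [T.Kfun_comm a b c d]
  exact T.k_card_b hcd hab (Ne.symm hne) hx

lemma k_out (hab : T.TreeAscent a b) (hcd : T.TreeAscent c d) {y x : ℕ}
    (h : ¬(1 ≤ x ∧ x < y ∧ y ≤ n)) : T.Kfun a b c d y x = 0 := by
  have hco := T.card_out h
  have h1 : ¬(y = b ∧ T.Cbset a c d x) := by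
    rintro ⟨rfl, hx⟩
    have e1 := T.cb_pos hab hcd hx
    have e2 := T.cb_le hab hcd hx
    have e3 := hab.2.1
    have e4 := hab.2.2.1
    exact h ⟨e1, by omega, e4⟩
  have h2 : ¬(y = d ∧ T.Cbset c a b x) := by
    rintro ⟨rfl, hx⟩
    have e1 := T.cb_pos hcd hab hx
    have e2 := T.cb_le hcd hab hx
    have e3 := hcd.2.1
    have e4 := hcd.2.2.1
    exact h ⟨e1, by omega, e4⟩
  rw [T.k_oth h1 h2, hco]

lemma k_le_s (hab : T.TreeAscent a b) (hcd : T.TreeAscent c d)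
    (hne : (a, b) ≠ (c, d)) (y x : ℕ) : T.Kfun a b c d y x ≤ s y := by
  by_cases h1 : y = b ∧ T.Cbset a c d x
  · obtain ⟨rfl, hx⟩ := h1
    rw [T.k_card_b hab hcd hne hx]
    exact (T.ascent_card hab).2
  · by_cases h2 : y = d ∧ T.Cbset c a b x
    · obtain ⟨rfl, hx⟩ := h2
      rw [T.k_card_d hab hcd hne hx]
      exact (T.ascent_card hcd).2
    · rw [T.k_oth h1 h2]
      exact T.card_le_s y x

/-- The combined climbing lemma for the extended column set. -/
lemma cb_spine (hab : T.TreeAscent a b) (hcd : T.TreeAscent c d) {x y : ℕ}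
    (hy : T.Cbset a c d y) (hxy : x < y) (hl : T.LeftOf y x) :
    T.Cbset a c d x ∨ T.card b a + 1 ≤ T.card b x := by
  rcases hy with hy | ⟨⟨hda, hc0⟩, hy⟩
  · rcases T.ascent_spine hab hy hxy hl with h | h
    · exact Or.inl (Or.inl h)
    · exact Or.inr h
  · rcases T.ascent_spine hcd hy hxy hl with h | h
    · exact Or.inl (Or.inr ⟨⟨hda, hc0⟩, h⟩)
    · -- card d x ≥ card d c + 1 ≥ 1, and d = a
      rw [hda] at h
      have hc0' : T.card a x ≠ 0 := by omega
      obtain ⟨hx1, hxa, han⟩ := T.card_pos_bounds hc0'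
      rcases T.pos_cases hx1 hxa han with h' | h' | h'
      · have hne' : x ≠ a := by omega
        have hin := T.card_descend h' hne'
        exact Or.inl (Or.inl (Or.inr ⟨T.card a x, by omega, hin⟩))
      · exact absurd (T.card_of_leftof h') hc0'
      · rcases T.ascent_spine hab (Or.inl rfl) hxa h' with h'' | h''
        · exact Or.inl (Or.inl h'')
        · exact Or.inr h''

/-- Case C of transitivity: a fired row-`b` increment forces the bound on the other column. -/
lemma lemC (hab : T.TreeAscent a b) (hcd : T.TreeAscent c d)
    (hne : (a, b) ≠ (c, d)) {x y : ℕ} (hy : T.Cbset a c d y) (hx : ¬T.Cbset a c d x)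
    (hxy : x < y) (hyb : y < b) (hK : T.Kfun a b c d y x ≠ 0) :
    T.card b a + 1 ≤ T.Kfun a b c d b x := by
  have hc1 : 1 ≤ c := hcd.1
  have hcn : c ≤ n := by have := hcd.2.1; have := hcd.2.2.1; omega
  by_cases hcyx : T.card y x = 0
  · -- the second indicator must have fired at (y,x)
    have h2 : y = d ∧ T.Cbset c a b x := by
      by_contra h2
      refine hK ?_
      have h1 : ¬(y = b ∧ T.Cbset a c d x) := fun hh => by omega
      rw [T.k_oth h1 h2, hcyx]
    obtain ⟨hyd, hcdx⟩ := h2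
    rw [hyd] at hxy hyb hcyx hy
    -- y = d from here on
    have hx' : T.InSubMinus0 c x := by
      rcases hcdx with h | ⟨⟨hbc, _⟩, _⟩
      · exact h
      · exfalso
        have := hcd.2.1
        omega
    have hdxc : T.Descend x c := T.minus0_descend hc1 hcn hx'
    have hkc : T.card d c = 0 := by
      rw [← T.card_eq_of_descend hdxc hcd.2.1]
      exact hcyx
    have hin0 : T.InSub d 0 c := by
      have := (T.ascent_card hcd).1
      rwa [hkc] at this
    -- analyse hy : Cbset a c d d
    rcases hy with hy | ⟨⟨hda, _⟩, hyc⟩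
    · rcases hy with hda | ⟨j, hj, hjd⟩
      · -- d = a : the F₂ situation
        rw [hda] at hin0
        exact absurd (Or.inr ⟨⟨hda, hin0⟩, hx'⟩) hx
      · -- d strictly inside T^a
        have hdcy : T.Descend c d := T.insub_descend (by have := hcd.2.1; omega) hin0
        have hdxy : T.Descend x d := T.descend_trans hdxc hdcy
        exact absurd (Or.inl (Or.inr ⟨j, hj, T.descend_insub hdxy hjd⟩)) hx
    · -- F₂ with InSubMinus0 c d : impossible since c < d
      exfalso
      rcases hyc with h | ⟨j, hj, hjd⟩
      · have := hcd.2.1; omega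
      · have := (T.insub_bounds hc1 hjd).2.1
        have := hcd.2.1
        omega
  · obtain ⟨hx1, hxy', hyn⟩ := T.card_pos_bounds hcyx
    rcases T.pos_cases hx1 hxy hyn with h | h | h
    · have hne' : x ≠ y := by omega
      have hin := T.card_descend h hne'
      exact absurd (T.cb_closed hab hcd hy hin (by omega)) hx
    · exact absurd (T.card_of_leftof h) hcyx
    · rcases T.cb_spine hab hcd hy hxy h with h' | h'
      · exact absurd h' hx
      · exact h'.trans (T.k_ge_card a b c d b x)

/-- Transitivity of the explicit join inversion multiset. -/
lemma k_trans (hab : T.TreeAscent a b) (hcd : T.TreeAscent c d)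
    (hne : (a, b) ≠ (c, d)) : IsTransitiveInv (T.Kfun a b c d) := by
  intro p q r hpq hqr
  by_cases h0 : T.Kfun a b c d q p = 0
  · exact Or.inl h0
  right
  by_cases h1 : r = b ∧ T.Cbset a c d q
  · obtain ⟨rfl, hq⟩ := h1
    rw [T.k_card_b hab hcd hne hq]
    by_cases hp : T.Cbset a c d p
    · rw [T.k_card_b hab hcd hne hp]
    · exact T.lemC hab hcd hne hq hp hpq hqr h0
  · by_cases h2 : r = d ∧ T.Cbset c a b q
    · obtain ⟨hrd, hq⟩ := h2
      rw [hrd] at hqr ⊢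
      rw [T.k_card_d hab hcd hne hq]
      by_cases hp : T.Cbset c a b p
      · rw [T.k_card_d hab hcd hne hp]
      · have h0' : T.Kfun c d a b q p ≠ 0 := by
          rw [← T.Kfun_comm a b c d]; exact h0
        have hres := T.lemC hcd hab (Ne.symm hne) hq hp hpq hqr h0'
        rwa [← T.Kfun_comm a b c d] at hres
    · rw [T.k_oth h1 h2]
      have hKB : T.card r q ≤ T.card r p := by
        by_cases hc : T.card q p = 0
        · have hdpq : T.Descend p q := by
            by_cases hqb : q = b ∧ T.Cbset a c d p
            · rw [hqb.1]
              exact T.descend_trans (T.cb_descend hab hcd hqb.2)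
                (T.insub_descend (by have := hab.2.1; omega) (T.ascent_card hab).1)
            · by_cases hqd : q = d ∧ T.Cbset c a b p
              · rw [hqd.1]
                exact T.descend_trans (T.cb_descend hcd hab hqd.2)
                  (T.insub_descend (by have := hcd.2.1; omega) (T.ascent_card hcd).1)
              · exact absurd (by rw [T.k_oth hqb hqd, hc]) h0
          exact le_of_eq (T.card_eq_of_descend hdpq hqr).symm
        · rcases T.card_transitive p q r hpq hqr with h | h
          · exact absurd h hc
          · exact h
      exact hKB.trans (T.k_ge_card a b c d r p)

/-- Any transitive multiset dominating the first rotation and containing one extra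
copy of `(d,c)` dominates the whole `K`. -/
lemma k_forced (hab : T.TreeAscent a b) (hcd : T.TreeAscent c d)
    (hne : (a, b) ≠ (c, d)) (M : ℕ → ℕ → ℕ) (hM : IsTransitiveInv M)
    (hMI : ∀ y x, T.card y x + (if y = b ∧ T.InSubMinus0 a x then 1 else 0) ≤ M y x)
    (hMdc : T.card d c + 1 ≤ M d c) :
    ∀ y x, T.Kfun a b c d y x ≤ M y x := by
  have ha1 : 1 ≤ a := hab.1
  have hc1 : 1 ≤ c := hcd.1
  have hMcard : ∀ y x, T.card y x ≤ M y x := by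
    intro y x
    have := hMI y x
    omega
  have subS : ∀ x, T.Cbset c a b x → T.card d c + 1 ≤ M d x := by
    intro x hx
    rcases hx with hx' | ⟨⟨hbc, hc0a⟩, hax⟩
    · rcases hx' with rfl | ⟨j, hj, hjx⟩
      · exact hMdc
      · have h1 : 0 < M c x := by
          have e1 : T.card c x = j := T.card_insub hc1 hjx
          have e2 := hMcard c x
          omega
        have hxc : x < c := (T.insub_bounds hc1 hjx).2.1
        rcases hM x c d hxc hcd.2.1 with h | h
        · omega
        · omega
    · -- F₁ : b = c, a ∈ T^c_0, x ∈ T^a∖0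
      have h1 : 0 < M b x := by
        have e1 := hMI b x
        rw [if_pos ⟨rfl, hax⟩] at e1
        omega
      have hxc : x < c := by
        have e1 := T.minus0_le ha1 hax
        have e2 := hab.2.1
        omega
      rw [hbc] at h1
      rcases hM x c d hxc hcd.2.1 with h | h
      · omega
      · omega
  intro y x
  by_cases h1 : y = b ∧ T.Cbset a c d x
  · obtain ⟨rfl, hx⟩ := h1
    rw [T.k_card_b hab hcd hne hx]
    rcases hx with hx' | ⟨⟨hda, hc0⟩, hcx⟩
    · have e1 := hMI y x
      rw [if_pos ⟨rfl, hx'⟩] at e1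
      have e2 : T.card y x = T.card y a :=
        T.card_minus0 ha1 (by have := hab.2.1; have := hab.2.2.1; omega) hab.2.1 hx'
      omega
    · -- F₂ : d = a, c ∈ T^a_0, x ∈ T^c∖0
      have hS : T.card d c + 1 ≤ M d x := subS x (Or.inl hcx)
      have h1' : 0 < M a x := by rw [← hda]; omega
      have hxa : x < a := by
        have e1 := T.minus0_le hc1 hcx
        have e2 := hcd.2.1
        omega
      have hMba : T.card y a + 1 ≤ M y a := by
        have e1 := hMI y a
        rw [if_pos ⟨rfl, Or.inl rfl⟩] at e1
        omega
      rcases hM x a y hxa hab.2.1 with h | h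
      · omega
      · omega
  · by_cases h2 : y = d ∧ T.Cbset c a b x
    · obtain ⟨rfl, hx⟩ := h2
      rw [T.k_card_d hab hcd hne hx]
      exact subS x hx
    · rw [T.k_oth h1 h2]
      exact hMcard y x

/-- The key join formula: adding `(d,c)` to the rotation along `(a,b)` and closing
transitively yields exactly `K`. -/
lemma k_join (hab : T.TreeAscent a b) (hcd : T.TreeAscent c d)
    (hne : (a, b) ≠ (c, d)) :
    tcInv (addInv s (fun y x => T.card y x +
        (if y = b ∧ T.InSubMinus0 a x then 1 else 0)) d c) = T.Kfun a b c d := by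
  set Iz := fun y x => T.card y x + (if y = b ∧ T.InSubMinus0 a x then 1 else 0) with hIz
  have hIzdc : Iz d c = T.card d c := by
    show T.card d c + _ = T.card d c
    rw [if_neg (T.not_dbac hab hcd hne)]
    omega
  have hklt : T.card d c < s d := (T.ascent_card hcd).2
  have hIzleK : ∀ y x, Iz y x ≤ T.Kfun a b c d y x := by
    intro y x
    by_cases hbx : y = b ∧ T.InSubMinus0 a x
    · obtain ⟨rfl, hx⟩ := hbx
      have e1 : Iz y x = T.card y x + 1 := by
        show T.card y x + _ = _
        rw [if_pos ⟨rfl, hx⟩]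
      have e2 := T.k_card_b hab hcd hne (Or.inl hx : T.Cbset a c d x)
      have e3 : T.card y x = T.card y a :=
        T.card_minus0 hab.1 (by have := hab.2.1; have := hab.2.2.1; omega) hab.2.1 hx
      omega
    · have e1 : Iz y x = T.card y x := by
        show T.card y x + _ = _
        rw [if_neg hbx]
        omega
      rw [e1]
      exact T.k_ge_card a b c d y x
  refine tcInv_eq_of (T.k_trans hab hcd hne) ?_ ?_
  · intro y x
    show (if y = d ∧ x = c then min (Iz y x + 1) (s y) else Iz y x) ≤ _
    split_ifs with h
    · obtain ⟨hyd, hxc⟩ := h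
      rw [hyd, hxc]
      have e2 := T.k_card_d hab hcd hne (Or.inl (Or.inl rfl) : T.Cbset c a b c)
      rw [e2, hIzdc]
      omega
    · exact hIzleK y x
  · have hMI : ∀ y x, Iz y x ≤ tcInv (addInv s Iz d c) y x := by
      intro y x
      refine le_trans ?_ (le_tcInv _ y x)
      show Iz y x ≤ (if y = d ∧ x = c then min (Iz y x + 1) (s y) else Iz y x)
      split_ifs with h
      · obtain ⟨rfl, rfl⟩ := h
        rw [hIzdc]
        omega
      · exact le_refl _
    have hMdc : T.card d c + 1 ≤ tcInv (addInv s Iz d c) d c := by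
      refine le_trans ?_ (le_tcInv _ d c)
      show _ ≤ (if d = d ∧ c = c then min (Iz d c + 1) (s d) else Iz d c)
      rw [if_pos ⟨rfl, rfl⟩, hIzdc]
      omega
    exact T.k_forced hab hcd hne _ (tcInv_trans _) hMI hMdc

end SDecTree
section Comb

variable (n : ℕ) (s : ℕ → ℕ) (y₀ κ : ℕ) (B : ℕ → Prop)

/-- Successor within the same group (or the hub `y₀`). -/
private noncomputable def nxt (x : ℕ) : ℕ :=
  sInf {w | x < w ∧ (w = y₀ ∨ (w < y₀ ∧ (B w ↔ B x)))}

private lemma nxt_spec {x : ℕ} (hx : x < y₀) :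
    x < nxt y₀ B x ∧ (nxt y₀ B x = y₀ ∨ (nxt y₀ B x < y₀ ∧ (B (nxt y₀ B x) ↔ B x))) :=
  Nat.sInf_mem (⟨y₀, hx, Or.inl rfl⟩ :
    {w | x < w ∧ (w = y₀ ∨ (w < y₀ ∧ (B w ↔ B x)))}.Nonempty)

private lemma nxt_le {x : ℕ} (hx : x < y₀) : nxt y₀ B x ≤ y₀ :=
  Nat.sInf_le ⟨hx, Or.inl rfl⟩

private lemma nxt_min {x w : ℕ} (h1 : x < w) (h2 : w = y₀ ∨ (w < y₀ ∧ (B w ↔ B x))) :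
    nxt y₀ B x ≤ w :=
  Nat.sInf_le ⟨h1, h2⟩

private noncomputable def combParent (x : ℕ) : ℕ :=
  if 1 ≤ x ∧ x < n then (if y₀ ≤ x then x + 1 else nxt y₀ B x) else 0

private noncomputable def combIdx (x : ℕ) : ℕ :=
  if 1 ≤ x ∧ x < n then
    (if y₀ ≤ x then s (x + 1)
     else if combParent n y₀ B x = y₀ then (if B x then κ else s y₀)
     else s (combParent n y₀ B x))
  else 0

variable (hy1 : 1 ≤ y₀) (hyn : y₀ ≤ n) (hκ : κ ≤ s y₀)
  (hBR : κ = s y₀ → ∀ x, 1 ≤ x → x < y₀ → B x)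

private lemma combParent_big {x : ℕ} (h1 : 1 ≤ x) (h2 : x < n) (h3 : y₀ ≤ x) :
    combParent n y₀ B x = x + 1 := by
  rw [combParent, if_pos ⟨h1, h2⟩, if_pos h3]

private lemma combParent_small {x : ℕ} (h1 : 1 ≤ x) (h2 : x < n) (h3 : x < y₀) :
    combParent n y₀ B x = nxt y₀ B x := by
  rw [combParent, if_pos ⟨h1, h2⟩, if_neg (by omega)]

private lemma combTree_aux : True := trivial

noncomputable def combTree : SDecTree n s where
  parent := combParent n y₀ B
  idx := combIdx n s y₀ κ B
  parent_gt := by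
    intro v h1 h2
    rw [combParent, if_pos ⟨h1, h2⟩]
    split_ifs with h3
    · omega
    · exact (nxt_spec y₀ B (by omega)).1
  parent_le := by
    intro v h1 h2
    rw [combParent, if_pos ⟨h1, h2⟩]
    split_ifs with h3
    · omega
    · exact le_trans (nxt_le y₀ B (by omega)) hyn
  idx_le := by
    intro v h1 h2
    rw [combIdx, if_pos ⟨h1, h2⟩]
    split_ifs with h3 h4 h5
    · rw [combParent_big n y₀ B h1 h2 h3]
    · rw [h4]
      exact hκ
    · rw [h4]
    · exact le_refl _
  slot_inj := by
    intro v w hv1 hvn hw1 hwn hp hi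
    by_cases hvy : y₀ ≤ v
    · by_cases hwy : y₀ ≤ w
      · have e1 := combParent_big n y₀ B hv1 hvn hvy
        have e2 := combParent_big n y₀ B hw1 hwn hwy
        omega
      · have e1 := combParent_big n y₀ B hv1 hvn hvy
        have e2 := combParent_small n y₀ B hw1 hwn (by omega)
        have e3 := nxt_le y₀ B (show w < y₀ by omega)
        omega
    · by_cases hwy : y₀ ≤ w
      · have e1 := combParent_small n y₀ B hv1 hvn (by omega)
        have e2 := combParent_big n y₀ B hw1 hwn hwy
        have e3 := nxt_le y₀ B (show v < y₀ by omega)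
        omega
      · -- both below y₀
        have hvy' : v < y₀ := by omega
        have hwy' : w < y₀ := by omega
        have e1 := combParent_small n y₀ B hv1 hvn hvy'
        have e2 := combParent_small n y₀ B hw1 hwn hwy'
        rw [e1, e2] at hp
        -- key : same group
        have hBvw : B v ↔ B w := by
          by_cases hpy : nxt y₀ B v = y₀
          · -- parents equal y₀; use idx
            by_contra hB
            have i1 : combIdx n s y₀ κ B v = (if B v then κ else s y₀) := by
              rw [combIdx, if_pos ⟨hv1, hvn⟩, if_neg (by omega), e1, if_pos hpy]
            have i2 : combIdx n s y₀ κ B w = (if B w then κ else s y₀) := by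
              rw [combIdx, if_pos ⟨hw1, hwn⟩, if_neg (by omega), e2, if_pos (hp ▸ hpy)]
            rw [i1, i2] at hi
            by_cases hBv : B v
            · have hBw : ¬B w := fun h => hB ⟨fun _ => h, fun _ => hBv⟩
              rw [if_pos hBv, if_neg hBw] at hi
              have := hBR hi w hw1 hwy'
              exact hBw this
            · have hBw : B w := by
                by_contra hBw
                exact hB ⟨fun h => absurd h hBv, fun h => absurd h hBw⟩
              rw [if_neg hBv, if_pos hBw] at hi
              have := hBR hi.symm v hv1 hvy'
              exact hBv this
          · -- common parent strictly below y₀ : group equality via membership of parent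
            have hpv := (nxt_spec y₀ B hvy').2
            have hpw := (nxt_spec y₀ B hwy').2
            rcases hpv with h | ⟨_, hv⟩
            · exact absurd h hpy
            rcases hpw with h | ⟨_, hw⟩
            · exact absurd (hp ▸ h) hpy
            rw [hp] at hv
            exact ⟨fun h => hw.1 (hv.2 h), fun h => hv.1 (hw.2 h)⟩
        -- then one is in the other's next-set, contradiction with minimality
        rcases lt_trichotomy v w with hlt | heq | hgt
        · exfalso
          have h1 : nxt y₀ B v ≤ w := nxt_min y₀ B hlt (Or.inr ⟨hwy', hBvw.symm⟩)
          have h2 := (nxt_spec y₀ B hwy').1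
          omega
        · exact heq
        · exfalso
          have h1 : nxt y₀ B w ≤ v := nxt_min y₀ B hgt (Or.inr ⟨hvy', hBvw⟩)
          have h2 := (nxt_spec y₀ B hvy').1
          omega
  parent_out := by
    intro v hv
    rw [combParent, if_neg (by omega)]
  idx_out := by
    intro v hv
    rw [combIdx, if_neg (by omega)]

end Comb
section CombCard

variable (n : ℕ) (s : ℕ → ℕ) (y₀ κ : ℕ) (B : ℕ → Prop)
  (hyn : y₀ ≤ n) (hκ : κ ≤ s y₀)
  (hBR : κ = s y₀ → ∀ x, 1 ≤ x → x < y₀ → B x)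

local notation "UU" => combTree n s y₀ κ B hyn hκ hBR

private lemma comb_descend_up : ∀ x m, 1 ≤ x → x ≤ m → y₀ ≤ m → m ≤ n →
    (UU).Descend x m := by
  intro x m
  have main : ∀ t x, m - x ≤ t → 1 ≤ x → x ≤ m → y₀ ≤ m → m ≤ n → (UU).Descend x m := by
    intro t
    induction t with
    | zero =>
        intro x hd h1 h2 h3 h4
        have : x = m := by omega
        subst this
        exact SDecTree.descend_refl _ h1 h4
    | succ t ih =>
        intro x hd h1 h2 h3 h4
        rcases eq_or_lt_of_le h2 with h | h
        · subst h; exact SDecTree.descend_refl _ h1 h4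
        · have hxn : x < n := by omega
          have hstep := SDecTree.descend_step UU h1 hxn
          have hple : (UU).parent x ≤ m ∧ x < (UU).parent x := by
            by_cases hxy : y₀ ≤ x
            · have := combParent_big n y₀ B h1 hxn hxy
              constructor
              · show combParent n y₀ B x ≤ m
                omega
              · show x < combParent n y₀ B x
                omega
            · have he := combParent_small n y₀ B h1 hxn (by omega)
              have h5 := nxt_le y₀ B (show x < y₀ by omega)
              have h6 := (nxt_spec y₀ B (show x < y₀ by omega)).1
              constructor
              · show combParent n y₀ B x ≤ m
                omega
              · show x < combParent n y₀ B x
                omega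
          exact SDecTree.descend_trans _ hstep
            (ih _ (by omega) (by omega) hple.1 h3 h4)
  exact main (m - x) x (le_refl _)

private lemma comb_step_small {x : ℕ} (h1 : 1 ≤ x) (hxy : x < y₀) :
    (UU).Descend x (nxt y₀ B x) := by
  have hxn : x < n := by omega
  have hstep := SDecTree.descend_step UU h1 hxn
  have he : (UU).parent x = nxt y₀ B x := combParent_small n y₀ B h1 hxn hxy
  rwa [he] at hstep

private lemma comb_group_reach : ∀ x y, 1 ≤ x → x < y → y < y₀ → (B x ↔ B y) →
    (UU).Descend x y := by
  intro x y
  have main : ∀ t x, y - x ≤ t → 1 ≤ x → x < y → y < y₀ → (B x ↔ B y) →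
      (UU).Descend x y := by
    intro t
    induction t with
    | zero => intro x hd h1 h2 h3 _; omega
    | succ t ih =>
        intro x hd h1 h2 h3 hB
        have hxy : x < y₀ := by omega
        have hle : nxt y₀ B x ≤ y := nxt_min y₀ B h2 (Or.inr ⟨h3, hB.symm⟩)
        have hgt := (nxt_spec y₀ B hxy).1
        rcases eq_or_lt_of_le hle with h | h
        · have := comb_step_small n s y₀ κ B hyn hκ hBR h1 hxy
          rwa [h] at this
        · have hspec := (nxt_spec y₀ B hxy).2
          rcases hspec with he | ⟨hlt, hBe⟩
          · omega
          · exact SDecTree.descend_trans _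
              (comb_step_small n s y₀ κ B hyn hκ hBR h1 hxy)
              (ih _ (by omega) (by omega) h h3 (hBe.trans hB))
  exact main (y - x) x (le_refl _)

private lemma comb_reach_hub : ∀ x, 1 ≤ x → x < y₀ →
    ∃ c, (UU).Descend x c ∧ 1 ≤ c ∧ c < y₀ ∧ (B c ↔ B x) ∧ (UU).parent c = y₀ := by
  intro x
  have main : ∀ t x, y₀ - x ≤ t → 1 ≤ x → x < y₀ →
      ∃ c, (UU).Descend x c ∧ 1 ≤ c ∧ c < y₀ ∧ (B c ↔ B x) ∧ (UU).parent c = y₀ := by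
    intro t
    induction t with
    | zero => intro x hd h1 h2; omega
    | succ t ih =>
        intro x hd h1 h2
        have hspec := (nxt_spec y₀ B h2).2
        have hgt := (nxt_spec y₀ B h2).1
        rcases hspec with he | ⟨hlt, hBe⟩
        · refine ⟨x, SDecTree.descend_refl _ h1 (by omega), h1, h2, Iff.rfl, ?_⟩
          show combParent n y₀ B x = y₀
          rw [combParent_small n y₀ B h1 (by omega) h2, he]
        · obtain ⟨c, hc1, hc2, hc3, hc4, hc5⟩ := ih (nxt y₀ B x) (by omega) (by omega) hlt
          exact ⟨c, SDecTree.descend_trans _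
            (comb_step_small n s y₀ κ B hyn hκ hBR h1 h2) hc1, hc2, hc3,
            hc4.trans hBe, hc5⟩
  exact main (y₀ - x) x (le_refl _)

private lemma comb_chain_group_aux : ∀ k x c, (UU).parent^[k] x = c →
    (∀ m ≤ k, 1 ≤ (UU).parent^[m] x ∧ (UU).parent^[m] x ≤ n) → c < y₀ →
    (B x ↔ B c) := by
  intro k
  induction k with
  | zero =>
      intro x c hk _ _
      simp only [Function.iterate_zero_apply] at hk
      rw [hk]
  | succ k ih =>
      intro x c hk hc hcy
      have h1 : 1 ≤ x := by
        have := hc 0 (Nat.zero_le _)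
        simpa using this.1
      have hp1 : 1 ≤ (UU).parent x := by
        have := hc 1 (by omega)
        simpa [Function.iterate_one] using this.1
      have hxn : x < n := by
        by_contra hxn
        have h0 : (UU).parent x = 0 := (UU).parent_out x (Or.inr (by omega))
        omega
      have hk' : (UU).parent^[k] ((UU).parent x) = c := by
        rw [← Function.iterate_succ_apply]
        exact hk
      have hc' : ∀ m ≤ k, 1 ≤ (UU).parent^[m] ((UU).parent x) ∧
          (UU).parent^[m] ((UU).parent x) ≤ n := by
        intro m hm
        rw [← Function.iterate_succ_apply]
        exact hc (m + 1) (by omega)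
      have hrec : B ((UU).parent x) ↔ B c := ih _ c hk' hc' hcy
      have hplec : (UU).parent x ≤ c := SDecTree.descend_le _ ⟨k, hk', hc'⟩
      have hxy : x < y₀ := by
        have := (UU).parent_gt x h1 hxn
        omega
      have he : (UU).parent x = nxt y₀ B x := combParent_small n y₀ B h1 hxn hxy
      rcases (nxt_spec y₀ B hxy).2 with hh | ⟨hlt, hBe⟩
      · omega
      · rw [he] at hrec
        exact hBe.symm.trans hrec

private lemma comb_chain_group : ∀ x c, (UU).Descend x c → 1 ≤ x → c < y₀ →
    (B x ↔ B c) := by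
  intro x c hd h1 h2
  obtain ⟨k, hk, hc⟩ := hd
  exact comb_chain_group_aux n s y₀ κ B hyn hκ hBR k x c hk hc h2

private lemma comb_child_small {c y : ℕ} (hy1 : 1 ≤ y) (hyy : y ≤ y₀)
    (h1 : 1 ≤ c) (hcn : c < n) (hpc : (UU).parent c = y) : c < y₀ := by
  by_contra hcy
  have he := combParent_big n y₀ B h1 hcn (by omega)
  have : c + 1 = y := by
    rw [← he]
    exact hpc
  omega

private lemma comb_insub_small {y j x : ℕ} (hy1 : 1 ≤ y) (hy : y < y₀)
    (h : (UU).InSub y j x) : j = s y := by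
  obtain ⟨c, hd, hp, hi, h1c, hcn⟩ := SDecTree.insub_parent_lt _ hy1 h
  have hcy : c < y₀ := comb_child_small n s y₀ κ B hyn hκ hBR hy1 (by omega) h1c hcn hp
  have : combIdx n s y₀ κ B c = s y := by
    rw [combIdx, if_pos ⟨h1c, hcn⟩, if_neg (by omega)]
    have hpe : combParent n y₀ B c = y := hp
    rw [if_neg (by omega), hpe]
  rw [← hi]
  exact this

private lemma comb_insub_hub {j x : ℕ} (hy01 : 1 ≤ y₀) (h : (UU).InSub y₀ j x) :
    j = if B x then κ else s y₀ := by
  obtain ⟨c, hd, hp, hi, h1c, hcn⟩ := SDecTree.insub_parent_lt _ hy01 h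
  have hcy : c < y₀ := comb_child_small n s y₀ κ B hyn hκ hBR hy01 (le_refl _) h1c hcn hp
  have hx1 : 1 ≤ x := (SDecTree.descend_bounds _ hd).1
  have hB : B x ↔ B c := comb_chain_group n s y₀ κ B hyn hκ hBR x c hd hx1 hcy
  have : combIdx n s y₀ κ B c = if B c then κ else s y₀ := by
    rw [combIdx, if_pos ⟨h1c, hcn⟩, if_neg (by omega)]
    have hpe : combParent n y₀ B c = y₀ := hp
    rw [if_pos hpe]
  rw [← hi]
  show combIdx n s y₀ κ B c = _
  rw [this]
  by_cases hBx : B x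
  · rw [if_pos hBx, if_pos (hB.mp hBx)]
  · rw [if_neg hBx, if_neg (fun h => hBx (hB.mpr h))]

private lemma comb_insub_hub_mk {x : ℕ} (hx1 : 1 ≤ x) (hxy : x < y₀) :
    (UU).InSub y₀ (if B x then κ else s y₀) x := by
  obtain ⟨c, hd, h1c, hcy, hB, hp⟩ :=
    comb_reach_hub n s y₀ κ B hyn hκ hBR x hx1 hxy
  refine ⟨c, hd, hp, ?_⟩
  have hcn : c < n := by omega
  show combIdx n s y₀ κ B c = _
  rw [combIdx, if_pos ⟨h1c, hcn⟩, if_neg (by omega)]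
  have hpe : combParent n y₀ B c = y₀ := hp
  rw [if_pos hpe]
  by_cases hBx : B x
  · rw [if_pos hBx, if_pos (hB.mpr hBx)]
  · rw [if_neg hBx, if_neg (fun h => hBx (hB.mp h))]

private lemma comb_insub_big {y x : ℕ} (hy : y₀ < y) (hyn' : y ≤ n) (hx1 : 1 ≤ x)
    (hxy : x < y) : (UU).InSub y (s y) x := by
  have h1 : 1 ≤ y - 1 := by omega
  have h2 : y - 1 < n := by omega
  have h3 : y₀ ≤ y - 1 := by omega
  refine ⟨y - 1, comb_descend_up n s y₀ κ B hyn hκ hBR x (y - 1) hx1 (by omega) h3 (by omega),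
    ?_, ?_⟩
  · have := combParent_big n y₀ B h1 h2 h3
    show combParent n y₀ B (y - 1) = y
    omega
  · show combIdx n s y₀ κ B (y - 1) = s y
    rw [combIdx, if_pos ⟨h1, h2⟩, if_pos h3]
    congr 1
    omega

/-- The card function of the double comb. -/
lemma comb_card (hy01 : 1 ≤ y₀) {y x : ℕ} (hx1 : 1 ≤ x) (hxy : x < y) (hyn' : y ≤ n) :
    (UU).card y x = if y₀ < y then s y
      else if y = y₀ then (if B x then κ else s y₀)
      else if B x ∧ ¬ B y then 0 else s y := by
  rcases lt_trichotomy y₀ y with hc | hc | hc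
  · rw [if_pos hc]
    exact SDecTree.card_insub _ (by omega)
      (comb_insub_big n s y₀ κ B hyn hκ hBR hc hyn' hx1 hxy)
  · subst hc
    rw [if_neg (by omega), if_pos rfl]
    have := comb_insub_hub_mk n s y₀ κ B hyn hκ hBR hx1 (by omega)
    exact SDecTree.card_insub _ (by omega) this
  · -- y < y₀
    rw [if_neg (by omega), if_neg (by omega)]
    by_cases hsame : B x ↔ B y
    · rw [if_neg (by tauto)]
      have hd := comb_group_reach n s y₀ κ B hyn hκ hBR x y hx1 hxy hc hsame
      have hin := SDecTree.card_descend _ hd (by omega)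
      exact comb_insub_small n s y₀ κ B hyn hκ hBR (by omega) hc hin
    · have hy1 : 1 ≤ y := by omega
      have hκs : κ < s y₀ := by
        rcases eq_or_lt_of_le hκ with h | h
        · exfalso
          have hBx := hBR h x hx1 (by omega)
          have hBy := hBR h y hy1 hc
          exact hsame ⟨fun _ => hBy, fun _ => hBx⟩
        · exact h
      by_cases hBx : B x
      · have hBy : ¬B y := fun h => hsame ⟨fun _ => h, fun _ => hBx⟩
        rw [if_pos ⟨hBx, hBy⟩]
        have i1 := comb_insub_hub_mk n s y₀ κ B hyn hκ hBR hx1 (by omega)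
        have i2 := comb_insub_hub_mk n s y₀ κ B hyn hκ hBR hy1 hc
        rw [if_pos hBx] at i1
        rw [if_neg hBy] at i2
        exact SDecTree.card_of_leftof _ ⟨y₀, κ, s y₀, hκs, i1, i2⟩
      · have hBy : B y := by
          by_contra hBy
          exact hsame ⟨fun h => absurd h hBx, fun h => absurd h hBy⟩
        rw [if_neg (by tauto)]
        have i1 := comb_insub_hub_mk n s y₀ κ B hyn hκ hBR hx1 (by omega)
        have i2 := comb_insub_hub_mk n s y₀ κ B hyn hκ hBR hy1 hc
        rw [if_neg hBx] at i1
        rw [if_pos hBy] at i2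
        exact SDecTree.card_of_rightof _ hx1 hxy hyn' ⟨y₀, κ, s y₀, hκs, i2, i1⟩

end CombCard
/-- `inv (Z ∨ Q) = ((inv T + (b,a))^tc + (d,c))^tc`, and the same with the
two added pairs in the other order, for `Z`, `Q` the rotations of `T` along distinct
tree ascents `(a,b)`, `(c,d)`. -/
theorem join_of_two_rotations (n : ℕ) (s : ℕ → ℕ) (T Z Q W : SDecTree n s)
    (a b c d : ℕ) (hne : (a, b) ≠ (c, d))
    (hZ : SDecTree.IsRotation T Z a b) (hQ : SDecTree.IsRotation T Q c d)
    (hW : SDecTree.IsJoin Z Q W) :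
    ∀ y x, 1 ≤ x → x < y → y ≤ n →
      W.card y x = tcInv (addInv s (tcInv (addInv s T.card b a)) d c) y x ∧
      W.card y x = tcInv (addInv s (tcInv (addInv s T.card d c)) b a) y x := by
  obtain ⟨hab, hZc⟩ := hZ
  obtain ⟨hcd, hQc⟩ := hQ
  obtain ⟨hWZ, hWQ, hWmin⟩ := hW
  have hrotZ := T.rotation_formula hab
  have hrotQ := T.rotation_formula hcd
  have hK1 : tcInv (addInv s (tcInv (addInv s T.card b a)) d c) = T.Kfun a b c d := by
    rw [hrotZ]
    exact T.k_join hab hcd hne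
  have hK2 : tcInv (addInv s (tcInv (addInv s T.card d c)) b a) = T.Kfun a b c d := by
    rw [hrotQ, T.k_join hcd hab (Ne.symm hne)]
    exact (T.Kfun_comm a b c d).symm
  -- values of Z and Q
  have hZval : ∀ y x, 1 ≤ x → x < y → y ≤ n →
      Z.card y x = T.card y x + (if y = b ∧ T.InSubMinus0 a x then 1 else 0) := by
    intro y x h1 h2 h3
    rw [hZc y x h1 h2 h3, hrotZ]
  have hQval : ∀ y x, 1 ≤ x → x < y → y ≤ n →
      Q.card y x = T.card y x + (if y = d ∧ T.InSubMinus0 c x then 1 else 0) := by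
    intro y x h1 h2 h3
    rw [hQc y x h1 h2 h3, hrotQ]
  -- the first rotation is dominated by K
  have hIzK : ∀ y x, T.card y x + (if y = b ∧ T.InSubMinus0 a x then 1 else 0) ≤
      T.Kfun a b c d y x := by
    intro y x
    have e1 : T.card y x + (if y = b ∧ T.InSubMinus0 a x then 1 else 0) ≤
        addInv s (fun y x => T.card y x + (if y = b ∧ T.InSubMinus0 a x then 1 else 0))
          d c y x := by
      show _ ≤ (if y = d ∧ x = c then
        min (T.card y x + (if y = b ∧ T.InSubMinus0 a x then 1 else 0) + 1) (s y)
        else T.card y x + (if y = b ∧ T.InSubMinus0 a x then 1 else 0))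
      by_cases h : y = d ∧ x = c
      · rw [if_pos h, h.1, h.2, if_neg (T.not_dbac hab hcd hne)]
        have hk := (T.ascent_card hcd).2
        omega
      · rw [if_neg h]
    refine e1.trans ?_
    rw [← T.k_join hab hcd hne]
    exact le_tcInv _ y x
  have hIqK : ∀ y x, T.card y x + (if y = d ∧ T.InSubMinus0 c x then 1 else 0) ≤
      T.Kfun a b c d y x := by
    intro y x
    have e1 : T.card y x + (if y = d ∧ T.InSubMinus0 c x then 1 else 0) ≤
        addInv s (fun y x => T.card y x + (if y = d ∧ T.InSubMinus0 c x then 1 else 0))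
          b a y x := by
      show _ ≤ (if y = b ∧ x = a then
        min (T.card y x + (if y = d ∧ T.InSubMinus0 c x then 1 else 0) + 1) (s y)
        else T.card y x + (if y = d ∧ T.InSubMinus0 c x then 1 else 0))
      by_cases h : y = b ∧ x = a
      · rw [if_pos h, h.1, h.2, if_neg (T.not_dbac hcd hab (Ne.symm hne))]
        have hk := (T.ascent_card hab).2
        omega
      · rw [if_neg h]
    refine e1.trans ?_
    rw [T.Kfun_comm a b c d, ← T.k_join hcd hab (Ne.symm hne)]
    exact le_tcInv _ y x
  -- lower bound : K ≤ W.card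
  have hlow : ∀ y x, T.Kfun a b c d y x ≤ W.card y x := by
    refine T.k_forced hab hcd hne W.card W.card_transitive ?_ ?_
    · intro y x
      by_cases hr : 1 ≤ x ∧ x < y ∧ y ≤ n
      · rw [← hZval y x hr.1 hr.2.1 hr.2.2]
        exact hWZ y x
      · have h0 : T.card y x + (if y = b ∧ T.InSubMinus0 a x then 1 else 0) = 0 := by
          rw [T.card_out hr, if_neg ?_]
          rintro ⟨rfl, hx⟩
          have e1 := T.minus0_descend hab.1
            (by have := hab.2.1; have := hab.2.2.1; omega) hx
          have e2 := T.descend_bounds e1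
          have e3 := hab.2.1
          have e4 := hab.2.2.1
          have e5 := T.descend_le e1
          exact hr ⟨e2.1, by omega, e4⟩
        rw [h0]
        exact Nat.zero_le _
    · have hcc : 1 ≤ c := hcd.1
      have hcdlt : c < d := hcd.2.1
      have hdn : d ≤ n := hcd.2.2.1
      have hq : Q.card d c = T.card d c + 1 := by
        rw [hQval d c hcc hcdlt hdn, if_pos ⟨rfl, Or.inl rfl⟩]
      have := hWQ d c
      omega
  -- upper bound and conclusion
  intro y x hx1 hxy hyn
  have hfin : W.card y x = T.Kfun a b c d y x := by
    refine le_antisymm ?_ (hlow y x)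
    set κ := T.Kfun a b c d y x with hκdef
    set Bp : ℕ → Prop := fun x' => T.Kfun a b c d y x' ≤ κ with hBp
    have hκs : κ ≤ s y := T.k_le_s hab hcd hne y x
    have hBR : κ = s y → ∀ x', 1 ≤ x' → x' < y → Bp x' := by
      intro h x' _ _
      show T.Kfun a b c d y x' ≤ κ
      rw [h]
      exact T.k_le_s hab hcd hne y x'
    set U := combTree n s y κ Bp hyn hκs hBR with hU
    have hUcard := fun (y' x' : ℕ) (h1 : 1 ≤ x') (h2 : x' < y') (h3 : y' ≤ n) =>
      comb_card n s y κ Bp hyn hκs hBR (show 1 ≤ y by omega) (y := y') (x := x') h1 h2 h3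
    have hUwle : ∀ (V : SDecTree n s),
        (∀ y' x', 1 ≤ x' → x' < y' → y' ≤ n →
          V.card y' x' ≤ T.Kfun a b c d y' x') → SDecTree.wle V U := by
      intro V hV y' x'
      by_cases hr : 1 ≤ x' ∧ x' < y' ∧ y' ≤ n
      · have hVK := hV y' x' hr.1 hr.2.1 hr.2.2
        have hKs := T.k_le_s hab hcd hne y' x'
        rw [hUcard y' x' hr.1 hr.2.1 hr.2.2]
        split_ifs with ha hb hc hd'
        · omega
        · -- y' = y and Bp x'
          have hc' : T.Kfun a b c d y x' ≤ κ := hc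
          subst hb
          omega
        · subst hb
          omega
        · -- y' < y, x' ∈ B, y' ∉ B : K y' x' = 0
          have hy'y : y' < y := by omega
          have hx'B : T.Kfun a b c d y x' ≤ κ := hd'.1
          have hy'B : ¬ T.Kfun a b c d y y' ≤ κ := hd'.2
          have hK0 : T.Kfun a b c d y' x' = 0 := by
            rcases T.k_trans hab hcd hne x' y' y hr.2.1 hy'y with h | h
            · exact h
            · omega
          omega
        · omega
      · rw [V.card_out hr]
        exact Nat.zero_le _
    have hZU : SDecTree.wle Z U := by
      refine hUwle Z ?_
      intro y' x' h1 h2 h3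
      rw [hZval y' x' h1 h2 h3]
      exact hIzK y' x'
    have hQU : SDecTree.wle Q U := by
      refine hUwle Q ?_
      intro y' x' h1 h2 h3
      rw [hQval y' x' h1 h2 h3]
      exact hIqK y' x'
    have hWU := hWmin U hZU hQU y x
    have hUval : U.card y x = κ := by
      rw [hUcard y x hx1 hxy hyn, if_neg (lt_irrefl y), if_pos rfl,
        if_pos (show Bp x from le_refl κ)]
    omega
  exact ⟨by rw [hK1]; exact hfin, by rw [hK2]; exact hfin⟩
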